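/- arXiv:1812.07550 — 7 statements merged into one kernel-verified Lean document; each statement's English description precedes it below -/
import Mathlib

section
/- For every complex number q with 0 < |q| < 1, ∑_{j=0}^∞ q^{j²} · (1+q)(1+q³)⋯(1+q^{2j-1}) / ((1−q²)(1−q⁴)⋯(1−q^{2j})) = ∑_{j=0}^∞ q^{2j²} · (1+q^{−1})(1+q^{−3})⋯(1+q^{−(2j−1)}) / ((1−q²)(1−q⁴)⋯(1−q^{2j})). -/
/-- For every complex `q` with `0 < |q| < 1`,
`∑_{j≥0} q^{j²} (1+q)(1+q³)⋯(1+q^{2j-1}) / ((1-q²)⋯(1-q^{2j}))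
  = ∑_{j≥0} q^{2j²} (1+q⁻¹)(1+q⁻³)⋯(1+q^{-(2j-1)}) / ((1-q²)⋯(1-q^{2j}))`. -/
theorem sum_eq_signed_sum (q : ℂ) (hq0 : 0 < ‖q‖) (hq1 : ‖q‖ < 1) :
    ∑' j : ℕ, q ^ (j ^ 2) * (∏ i ∈ Finset.range j, (1 + q ^ (2 * i + 1)))
        / (∏ i ∈ Finset.range j, (1 - q ^ (2 * (i + 1))))
      = ∑' j : ℕ, q ^ (2 * j ^ 2) * (∏ i ∈ Finset.range j, (1 + (q ^ (2 * i + 1))⁻¹))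
        / (∏ i ∈ Finset.range j, (1 - q ^ (2 * (i + 1)))) := by
  have hq : q ≠ 0 := by
    intro h
    simp [h] at hq0
  refine tsum_congr fun j => ?_
  have hsum : ∑ i ∈ Finset.range j, (2 * i + 1) = j ^ 2 := by
    induction j with
    | zero => simp
    | succ n ih => rw [Finset.sum_range_succ, ih]; ring
  have h1 : ∏ i ∈ Finset.range j, (1 + (q ^ (2 * i + 1))⁻¹)
      = (q ^ (j ^ 2))⁻¹ * ∏ i ∈ Finset.range j, (1 + q ^ (2 * i + 1)) := by
    rw [← hsum, ← Finset.prod_pow_eq_pow_sum, ← Finset.prod_inv_distrib,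
      ← Finset.prod_mul_distrib]
    refine Finset.prod_congr rfl fun i _ => ?_
    have hx : q ^ (2 * i + 1) ≠ 0 := pow_ne_zero _ hq
    field_simp
    ring
  rw [h1]
  have hpow : q ^ (2 * j ^ 2) = q ^ (j ^ 2) * q ^ (j ^ 2) := by
    rw [← pow_add]; ring_nf
  have hj : q ^ (j ^ 2) ≠ 0 := pow_ne_zero _ hq
  rw [hpow, mul_assoc, mul_inv_cancel_left₀ hj]
end

section
/- For all positive integers n and j, the map g : G_{n,j} → S_{n,j} sending γ = (γ₁, …, γ_j) to the signed partition (π, ν), where π_k = γ_k + 4k − 2j − 2 + P(γ_k) + 2·∑_{i=k+1}^{j} P(γ_i) for 1 ≤ k ≤ j, and ν is the partition containing the part 2k−1 (with multiplicity one) exactly for those k with γ_k odd, is a bijection. -/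
/-- The parity function: `P k = 0` if `k` is even and `P k = 1` if `k` is odd. -/
def P (m : ℤ) : ℤ := if Even m then 0 else 1

/-- The map `g` of the bijection: `γ = (γ₁, …, γ_j) ↦ (π, ν)` where
`π_k = γ_k + 4k - 2j - 2 + P(γ_k) + 2 ∑_{i=k+1}^j P(γ_i)` and `ν` contains the part
`2k - 1` exactly for those `k` with `γ_k` odd.  (Indices here are 0-based, so the
`k`-th entry of the tuple, `k : Fin j`, is the `(k+1)`-st part.) -/
def gMap (j : ℕ) (γ : Fin j → ℤ) : (Fin j → ℤ) × Finset ℤ :=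
  (fun k => γ k + 4 * ((k : ℤ) + 1) - 2 * j - 2 + P (γ k)
      + 2 * ∑ i ∈ Finset.Ioi k, P (γ i),
   Finset.image (fun k : Fin j => 2 * (k : ℤ) + 1)
     (Finset.univ.filter fun k => Odd (γ k)))

/-- The inverse map `h`: `(π, ν) ↦ γ` where
`γ_k = π_k - 4k + 2j + 2 - f_{2k-1} - 2 ∑_{i=k+1}^j f_{2i-1}`, `f_{2k-1}` being the
multiplicity (0 or 1) of the part `2k - 1` in `ν`. -/
def hMap (j : ℕ) (σ : (Fin j → ℤ) × Finset ℤ) : Fin j → ℤ :=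
  fun k => σ.1 k - 4 * ((k : ℤ) + 1) + 2 * (j : ℤ) + 2
    - (if 2 * (k : ℤ) + 1 ∈ σ.2 then 1 else 0)
    - 2 * ∑ i ∈ Finset.Ioi k, (if 2 * (i : ℤ) + 1 ∈ σ.2 then 1 else 0)

/-- `Gset n j` : Göllnitz–Gordon partitions of `n` with exactly `j` parts, as
weakly decreasing `j`-tuples `γ` of positive integers with `γ_i - γ_{i+1} ≥ 2`,
and `γ_i - γ_{i+1} ≥ 3` whenever `γ_i` is even. -/
def Gset (n j : ℕ) : Set (Fin j → ℤ) :=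
  {γ | (∀ k, 1 ≤ γ k) ∧
    (∀ i : ℕ, ∀ h : i + 1 < j,
      2 ≤ γ ⟨i, Nat.lt_of_succ_lt h⟩ - γ ⟨i + 1, h⟩ ∧
      (Even (γ ⟨i, Nat.lt_of_succ_lt h⟩) → 3 ≤ γ ⟨i, Nat.lt_of_succ_lt h⟩ - γ ⟨i + 1, h⟩)) ∧
    ∑ k, γ k = (n : ℤ)}

/-- `Sset n j` : signed Göllnitz–Gordon partitions of `n` whose positive
subpartition `π` has exactly `j` parts: `π` is a weakly decreasing `j`-tuple of even
parts, each at least `2j`, and the negative subpartition `ν` is a set of distinct odd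
positive parts, each at most `2j - 1` (hence there are at most `j` of them), with
`|π| - |ν| = n`. -/
def Sset (n j : ℕ) : Set ((Fin j → ℤ) × Finset ℤ) :=
  {σ | Antitone σ.1 ∧ (∀ k, 1 ≤ σ.1 k) ∧
    (∀ k, Even (σ.1 k) ∧ 2 * (j : ℤ) ≤ σ.1 k) ∧
    σ.2.card ≤ j ∧
    (∀ m ∈ σ.2, Odd m ∧ 1 ≤ m ∧ m ≤ 2 * (j : ℤ) - 1) ∧
    (∑ k, σ.1 k) - (∑ m ∈ σ.2, m) = (n : ℤ)}


open Finset

section GGlemmas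

lemma gg_P_even {m : ℤ} (h : Even m) : P m = 0 := if_pos h
lemma gg_P_odd {m : ℤ} (h : Odd m) : P m = 1 := if_neg (Int.not_even_iff_odd.mpr h)
lemma gg_P01 (m : ℤ) : P m = 0 ∨ P m = 1 := by unfold P; split <;> simp

lemma gg_sum_Ioi (j : ℕ) (f : Fin j → ℤ) :
    ∑ k : Fin j, ∑ i ∈ Ioi k, f i = ∑ i : Fin j, (i : ℤ) * f i := by
  rw [Finset.sum_comm' (t' := univ) (s' := fun i => Iio i) (fun x y => by
    simp [Finset.mem_Ioi, Finset.mem_Iio, and_comm])]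
  refine Finset.sum_congr rfl fun i _ => ?_
  rw [Finset.sum_const, Fin.card_Iio, nsmul_eq_mul]

lemma gg_gauss (j : ℕ) : (∑ i ∈ Finset.range j, (i:ℤ)) * 2 = j * (j - 1) := by
  induction j with
  | zero => simp
  | succ m ih =>
    rw [Finset.sum_range_succ]
    push_cast
    push_cast at ih
    linear_combination ih

lemma gg_sum_lin (j : ℕ) :
    ∑ k : Fin j, (4*((k:ℤ)+1) - 2*(j:ℤ) - 2) = 0 := by
  rw [Fin.sum_univ_eq_sum_range (fun i => 4*((i:ℤ)+1) - 2*(j:ℤ) - 2) j]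
  have h := gg_gauss j
  have e : ∀ i ∈ Finset.range j, 4*((i:ℤ)+1) - 2*(j:ℤ) - 2 = 4*(i:ℤ) + (2 - 2*(j:ℤ)) := by
    intro i _; ring
  rw [Finset.sum_congr rfl e, Finset.sum_add_distrib, ← Finset.mul_sum,
    Finset.sum_const, Finset.card_range, nsmul_eq_mul]
  linear_combination 2 * h

lemma gg_sum_shape (j : ℕ) (a e : Fin j → ℤ) :
    ∑ k : Fin j, (a k + 4*((k:ℤ)+1) - 2*(j:ℤ) - 2 + e k + 2 * ∑ i ∈ Ioi k, e i)
      = ∑ k : Fin j, a k + ∑ k : Fin j, (2*(k:ℤ)+1) * e k := by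
  have e1 : ∀ k ∈ (univ : Finset (Fin j)),
      a k + 4*((k:ℤ)+1) - 2*(j:ℤ) - 2 + e k + 2 * ∑ i ∈ Ioi k, e i
        = (a k + (2*(k:ℤ)+1) * e k) + ((4*((k:ℤ)+1) - 2*(j:ℤ) - 2)
          + (2 * (∑ i ∈ Ioi k, e i) - 2 * ((k:ℤ) * e k))) := by
    intro k _; ring
  rw [Finset.sum_congr rfl e1, Finset.sum_add_distrib, Finset.sum_add_distrib,
    Finset.sum_add_distrib, gg_sum_lin, Finset.sum_sub_distrib, ← Finset.mul_sum,
    ← Finset.mul_sum, gg_sum_Ioi]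
  ring

lemma gg_mem_gMap_snd (j : ℕ) (γ : Fin j → ℤ) (k : Fin j) :
    (2 * (k:ℤ) + 1 ∈ (gMap j γ).2) ↔ Odd (γ k) := by
  simp only [gMap, Finset.mem_image, Finset.mem_filter, Finset.mem_univ, true_and]
  constructor
  · rintro ⟨k', hk', he⟩
    have : (k' : ℕ) = (k : ℕ) := by exact_mod_cast (by omega : ((k':ℕ):ℤ) = ((k:ℕ):ℤ))
    rwa [show k' = k from Fin.ext this] at hk'
  · exact fun h => ⟨k, h, rfl⟩

lemma gg_ind_gMap (j : ℕ) (γ : Fin j → ℤ) (k : Fin j) :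
    (if 2 * (k:ℤ) + 1 ∈ (gMap j γ).2 then (1:ℤ) else 0) = P (γ k) := by
  simp only [gg_mem_gMap_snd]
  rcases Int.even_or_odd (γ k) with h | h
  · rw [gg_P_even h, if_neg (by simpa [Int.not_odd_iff_even] using h)]
  · rw [gg_P_odd h, if_pos h]

lemma gg_hMap_gMap (j : ℕ) (γ : Fin j → ℤ) : hMap j (gMap j γ) = γ := by
  funext k
  simp only [hMap]
  rw [gg_ind_gMap, Finset.sum_congr rfl fun i _ => gg_ind_gMap j γ i]
  show γ k + 4 * ((k:ℤ)+1) - 2*(j:ℤ) - 2 + P (γ k) + 2 * ∑ i ∈ Ioi k, P (γ i)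
    - 4 * ((k:ℤ)+1) + 2*(j:ℤ) + 2 - P (γ k) - 2 * ∑ i ∈ Ioi k, P (γ i) = γ k
  ring

lemma gg_Ioi_castSucc {m : ℕ} (i : Fin m) :
    (Ioi (i.castSucc) : Finset (Fin (m+1))) = insert i.succ (Ioi i.succ) := by
  ext x
  simp only [Finset.mem_Ioi, Finset.mem_insert, Fin.lt_def, Fin.coe_castSucc, Fin.val_succ,
    Fin.ext_iff]
  omega

lemma gg_sum_Ioi_castSucc {m : ℕ} (i : Fin m) (f : Fin (m+1) → ℤ) :
    ∑ x ∈ Ioi (i.castSucc), f x = f i.succ + ∑ x ∈ Ioi i.succ, f x := by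
  rw [gg_Ioi_castSucc, Finset.sum_insert (by simp)]

lemma gg_Ioi_last {m : ℕ} : (Ioi (Fin.last m) : Finset (Fin (m+1))) = ∅ := by
  ext x
  simp only [Finset.mem_Ioi, Fin.lt_def, Fin.val_last, Finset.notMem_empty, iff_false, not_lt]
  omega

lemma gg_exists_fin (j : ℕ) {m : ℤ} (ho : Odd m) (h1 : 1 ≤ m) (h2 : m ≤ 2*(j:ℤ) - 1) :
    ∃ k : Fin j, 2 * (k:ℤ) + 1 = m := by
  obtain ⟨t, rfl⟩ := ho
  have ht0 : 0 ≤ t := by omega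
  have htj : t.toNat < j := by omega
  exact ⟨⟨t.toNat, htj⟩, by simp [Int.toNat_of_nonneg ht0]⟩

lemma gg_sum_gMap_snd (j : ℕ) (γ : Fin j → ℤ) :
    ∑ m ∈ (gMap j γ).2, m = ∑ k : Fin j, (2*(k:ℤ)+1) * P (γ k) := by
  show ∑ m ∈ Finset.image _ _, m = _
  rw [Finset.sum_image (by
    intro a _ b _ h
    exact Fin.ext (by exact_mod_cast (by have h' : 2*((a:ℕ):ℤ)+1 = 2*((b:ℕ):ℤ)+1 := h; omega : ((a:ℕ):ℤ) = ((b:ℕ):ℤ))))]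
  rw [Finset.sum_filter]
  refine Finset.sum_congr rfl fun k _ => ?_
  rcases Int.even_or_odd (γ k) with h | h
  · rw [gg_P_even h, if_neg (by simpa [Int.not_odd_iff_even] using h), mul_zero]
  · rw [gg_P_odd h, if_pos h, mul_one]

lemma gg_sset_snd_eq (j : ℕ) (ν : Finset ℤ)
    (hν : ∀ m ∈ ν, Odd m ∧ 1 ≤ m ∧ m ≤ 2*(j:ℤ) - 1) :
    ν = Finset.image (fun k : Fin j => 2 * (k:ℤ) + 1)
      (Finset.univ.filter fun k => 2 * (k:ℤ) + 1 ∈ ν) := by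
  ext m
  simp only [Finset.mem_image, Finset.mem_filter, Finset.mem_univ, true_and]
  constructor
  · intro hm
    obtain ⟨ho, h1, h2⟩ := hν m hm
    obtain ⟨k, hk⟩ := gg_exists_fin j ho h1 h2
    exact ⟨k, by rwa [hk], hk⟩
  · rintro ⟨k, hk, rfl⟩; exact hk

lemma gg_sum_sset_snd (j : ℕ) (ν : Finset ℤ)
    (hν : ∀ m ∈ ν, Odd m ∧ 1 ≤ m ∧ m ≤ 2*(j:ℤ) - 1) :
    ∑ m ∈ ν, m = ∑ k : Fin j, (2*(k:ℤ)+1) * (if 2 * (k:ℤ) + 1 ∈ ν then 1 else 0) := by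
  conv_lhs => rw [gg_sset_snd_eq j ν hν]
  rw [Finset.sum_image (by
    intro a _ b _ h
    exact Fin.ext (by exact_mod_cast (by have h' : 2*((a:ℕ):ℤ)+1 = 2*((b:ℕ):ℤ)+1 := h; omega : ((a:ℕ):ℤ) = ((b:ℕ):ℤ))))]
  rw [Finset.sum_filter]
  refine Finset.sum_congr rfl fun k _ => ?_
  split <;> ring

lemma gg_sum_gMap_fst (j : ℕ) (γ : Fin j → ℤ) :
    ∑ k, (gMap j γ).1 k = ∑ k, γ k + ∑ k : Fin j, (2*(k:ℤ)+1) * P (γ k) := by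
  have := gg_sum_shape j γ (fun k => P (γ k))
  simpa only [gMap] using this

/-- parity of `hMap` values, given that `σ.1 k` is even -/
lemma gg_hMap_parity (j : ℕ) (σ : (Fin j → ℤ) × Finset ℤ) (k : Fin j)
    (he : Even (σ.1 k)) :
    P (hMap j σ k) = (if 2 * (k:ℤ) + 1 ∈ σ.2 then 1 else 0) := by
  obtain ⟨t, ht⟩ := he
  set S : ℤ := ∑ i ∈ Ioi k, (if 2 * (i:ℤ) + 1 ∈ σ.2 then (1:ℤ) else 0) with hS
  have hval : hMap j σ k = t + t - 4 * ((k:ℤ) + 1) + 2 * (j:ℤ) + 2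
      - (if 2 * (k : ℤ) + 1 ∈ σ.2 then 1 else 0) - 2 * S := by
    simp only [hMap, ← ht, hS]
  by_cases hm : 2 * (k:ℤ) + 1 ∈ σ.2
  · rw [if_pos hm]
    rw [if_pos hm] at hval
    refine gg_P_odd ⟨t - 2 * ((k:ℤ) + 1) + (j:ℤ) - S, by rw [hval]; ring⟩
  · rw [if_neg hm]
    rw [if_neg hm] at hval
    refine gg_P_even ⟨t - 2 * ((k:ℤ) + 1) + (j:ℤ) + 1 - S, by rw [hval]; ring⟩

lemma gg_gMap_hMap (j : ℕ) (σ : (Fin j → ℤ) × Finset ℤ)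
    (heven : ∀ k, Even (σ.1 k))
    (hν : ∀ m ∈ σ.2, Odd m ∧ 1 ≤ m ∧ m ≤ 2*(j:ℤ) - 1) :
    gMap j (hMap j σ) = σ := by
  have hP : ∀ k : Fin j, P (hMap j σ k)
      = (if 2 * (k:ℤ) + 1 ∈ σ.2 then 1 else 0) :=
    fun k => gg_hMap_parity j σ k (heven k)
  refine Prod.ext ?_ ?_
  · funext k
    show hMap j σ k + 4 * ((k : ℤ) + 1) - 2 * j - 2 + P (hMap j σ k)
      + 2 * ∑ i ∈ Finset.Ioi k, P (hMap j σ i) = σ.1 k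
    rw [hP k, Finset.sum_congr rfl fun i _ => hP i]
    simp only [hMap]
    ring
  · show Finset.image _ _ = σ.2
    conv_rhs => rw [gg_sset_snd_eq j σ.2 hν]
    congr 1
    ext k
    simp only [Finset.mem_filter, Finset.mem_univ, true_and]
    have := hP k
    constructor
    · intro ho
      rw [gg_P_odd ho] at this
      by_contra hm
      rw [if_neg hm] at this
      exact one_ne_zero this
    · intro hm
      rw [if_pos hm] at this
      rcases Int.even_or_odd (hMap j σ k) with h | h
      · rw [gg_P_even h] at this; exact absurd this.symm one_ne_zero
      · exact h

end GGlemmas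

/-- For all positive `n` and `j`, the map `g` is a bijection from `G_{n,j}` onto
`S_{n,j}`. -/
theorem gMap_bijOn (n j : ℕ) (hn : 0 < n) (hj : 0 < j) :
    Set.BijOn (gMap j) (Gset n j) (Sset n j) := by
  obtain ⟨m, rfl⟩ : ∃ m, j = m + 1 := ⟨j - 1, (Nat.succ_pred_eq_of_pos hj).symm⟩
  have hGS : Set.MapsTo (gMap (m+1)) (Gset n (m+1)) (Sset n (m+1)) := by
    rintro γ ⟨hpos, hgap, hsum⟩
    have hanti : Antitone (gMap (m+1) γ).1 := by
      rw [Fin.antitone_iff_succ_le]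
      intro i
      obtain ⟨h2, h3⟩ := hgap i.val (Nat.succ_lt_succ i.isLt)
      have hc : (⟨(i:ℕ), Nat.lt_of_succ_lt (Nat.succ_lt_succ i.isLt)⟩ : Fin (m+1))
          = i.castSucc := rfl
      have hs : (⟨(i:ℕ) + 1, Nat.succ_lt_succ i.isLt⟩ : Fin (m+1)) = i.succ := rfl
      rw [hc, hs] at h2 h3
      simp only [gMap]
      rw [gg_sum_Ioi_castSucc i (fun x => P (γ x))]
      have hcc : ((i.castSucc : ℕ) : ℤ) = (i : ℤ) := by norm_cast
      have hss : ((i.succ : ℕ) : ℤ) = (i : ℤ) + 1 := by norm_cast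
      rw [hcc, hss]
      rcases Int.even_or_odd (γ i.castSucc) with hec | hoc
      · have h3' := h3 hec
        rw [gg_P_even hec]
        rcases Int.even_or_odd (γ i.succ) with hes | hos
        · obtain ⟨t, ht⟩ := hec.sub hes
          have h4 : 4 ≤ γ i.castSucc - γ i.succ := by
            rw [ht] at h3' ⊢; omega
          rw [gg_P_even hes]
          linarith
        · rw [gg_P_odd hos]; linarith
      · rw [gg_P_odd hoc]
        rcases Int.even_or_odd (γ i.succ) with hes | hos
        · obtain ⟨t, ht⟩ := hoc.add_even hes
          have h3' : 3 ≤ γ i.castSucc - γ i.succ := by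
            obtain ⟨a, ha⟩ := hoc
            obtain ⟨b, hb⟩ := hes
            omega
          rw [gg_P_even hes]; linarith
        · rw [gg_P_odd hos]; linarith
    have hlast : (gMap (m+1) γ).1 (Fin.last m)
        = γ (Fin.last m) + P (γ (Fin.last m)) + 2 * m := by
      simp only [gMap, gg_Ioi_last, Finset.sum_empty, Fin.val_last]
      push_cast
      ring
    have hlast2 : 2 * ((m:ℤ) + 1) ≤ (gMap (m+1) γ).1 (Fin.last m) := by
      rw [hlast]
      have h1 := hpos (Fin.last m)
      rcases Int.even_or_odd (γ (Fin.last m)) with he | ho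
      · rw [gg_P_even he]
        obtain ⟨t, ht⟩ := he
        rw [ht] at h1 ⊢
        omega
      · rw [gg_P_odd ho]; linarith
    have hge : ∀ k, 2 * ((m:ℤ) + 1) ≤ (gMap (m+1) γ).1 k := fun k =>
      le_trans hlast2 (hanti (Fin.le_last k))
    have heven : ∀ k, Even ((gMap (m+1) γ).1 k) := by
      intro k
      have h1 : Even (γ k + P (γ k)) := by
        rcases Int.even_or_odd (γ k) with he | ho
        · rw [gg_P_even he]; simpa using he
        · rw [gg_P_odd ho]
          obtain ⟨t, ht⟩ := ho
          exact ⟨t + 1, by omega⟩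
      have : (gMap (m+1) γ).1 k = (γ k + P (γ k))
          + 2 * (2 * ((k:ℤ) + 1) - (m+1) - 1 + ∑ i ∈ Finset.Ioi k, P (γ i)) := by
        simp only [gMap]; push_cast; ring
      rw [this]
      exact h1.add (even_two_mul _)
    refine ⟨hanti, ?_, ?_, ?_, ?_, ?_⟩
    · intro k
      have := hge k
      have : (0:ℤ) ≤ m := Int.ofNat_nonneg m
      push_cast at *
      linarith
    · intro k
      refine ⟨heven k, ?_⟩
      have := hge k; push_cast at *; linarith
    · exact le_trans Finset.card_image_le
        (le_trans (Finset.card_filter_le _ _) (by simp))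
    · intro x hx
      simp only [gMap, Finset.mem_image, Finset.mem_filter, Finset.mem_univ, true_and] at hx
      obtain ⟨k, _, rfl⟩ := hx
      have hk : ((k:ℕ):ℤ) < (m:ℤ) + 1 := by exact_mod_cast k.isLt
      have hk0 : (0:ℤ) ≤ ((k:ℕ):ℤ) := Int.ofNat_nonneg _
      refine ⟨⟨(k:ℤ), by ring⟩, by linarith, by push_cast; linarith⟩
    · rw [gg_sum_gMap_fst, gg_sum_gMap_snd, hsum]
      ring
  have hSG : Set.MapsTo (hMap (m+1)) (Sset n (m+1)) (Gset n (m+1)) := by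
    rintro σ ⟨hanti, hpos, hej, hcard, hν, hsum⟩
    have hS0 : ∀ k : Fin (m+1),
        (0:ℤ) ≤ ∑ i ∈ Finset.Ioi k, (if 2*(i:ℤ)+1 ∈ σ.2 then (1:ℤ) else 0) :=
      fun k => Finset.sum_nonneg fun i _ => by split <;> norm_num
    have hSle : ∀ k : Fin (m+1),
        (∑ i ∈ Finset.Ioi k, (if 2*(i:ℤ)+1 ∈ σ.2 then (1:ℤ) else 0)) ≤ (m:ℤ) - (k:ℤ) := by
      intro k
      calc ∑ i ∈ Finset.Ioi k, (if 2*(i:ℤ)+1 ∈ σ.2 then (1:ℤ) else 0)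
          ≤ ∑ _i ∈ Finset.Ioi k, (1:ℤ) :=
            Finset.sum_le_sum fun i _ => by split <;> norm_num
        _ = ((Finset.Ioi k).card : ℤ) := by rw [Finset.sum_const, nsmul_eq_mul, mul_one]
        _ ≤ (m:ℤ) - (k:ℤ) := by
            rw [Fin.card_Ioi]
            have := k.isLt
            push_cast [Nat.cast_sub]
            omega
    have he01 : ∀ k : Fin (m+1), (if 2*(k:ℤ)+1 ∈ σ.2 then (1:ℤ) else 0) = 0 ∨
        (if 2*(k:ℤ)+1 ∈ σ.2 then (1:ℤ) else 0) = 1 := fun k => by split <;> simp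
    have hπk : ∀ k : Fin (m+1), 2 * ((m:ℤ)+1) ≤ σ.1 k := by
      intro k; have := (hej k).2; push_cast at this ⊢; linarith
    have hkm : ∀ k : Fin (m+1), ((k:ℕ):ℤ) ≤ (m:ℤ) := by
      intro k
      have := k.isLt
      exact_mod_cast Nat.lt_succ_iff.mp this
    refine ⟨?_, ?_, ?_⟩
    · intro k
      simp only [hMap]
      have h1 := hπk k
      have h2 := hSle k
      have h3 := hS0 k
      rcases he01 k with h4 | h4 <;> rw [h4] <;> push_cast <;>
        [skip; skip] <;> (have := hkm k; linarith)
    · intro i hi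
      set fi : Fin m := ⟨i, by omega⟩ with hfi
      have hc : (⟨i, Nat.lt_of_succ_lt hi⟩ : Fin (m+1)) = fi.castSucc := rfl
      have hs : (⟨i + 1, hi⟩ : Fin (m+1)) = fi.succ := rfl
      rw [hc, hs]
      have hπ : σ.1 fi.succ ≤ σ.1 fi.castSucc := hanti (Fin.castSucc_lt_succ (i := fi)).le
      have hcc : ((fi.castSucc : ℕ) : ℤ) = ((fi:ℕ) : ℤ) := by norm_cast
      have hss : ((fi.succ : ℕ) : ℤ) = ((fi:ℕ) : ℤ) + 1 := by norm_cast
      have hgapval : hMap (m+1) σ fi.castSucc - hMap (m+1) σ fi.succ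
          = σ.1 fi.castSucc - σ.1 fi.succ + 4
            - (if 2*((fi.castSucc:ℕ):ℤ)+1 ∈ σ.2 then (1:ℤ) else 0)
            - (if 2*((fi.succ:ℕ):ℤ)+1 ∈ σ.2 then (1:ℤ) else 0) := by
        simp only [hMap]
        rw [gg_sum_Ioi_castSucc fi (fun x => if 2*((x:ℕ):ℤ)+1 ∈ σ.2 then (1:ℤ) else 0)]
        rw [hcc, hss]
        ring
      constructor
      · rw [hgapval]
        rcases he01 fi.castSucc with h4 | h4 <;> rcases he01 fi.succ with h5 | h5 <;>
          rw [h4, h5] <;> linarith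
      · intro heve
        have hPc : P (hMap (m+1) σ fi.castSucc)
            = (if 2*((fi.castSucc:ℕ):ℤ)+1 ∈ σ.2 then (1:ℤ) else 0) :=
          gg_hMap_parity (m+1) σ fi.castSucc (hej fi.castSucc).1
        rw [gg_P_even heve] at hPc
        rw [hgapval, ← hPc]
        rcases he01 fi.succ with h5 | h5 <;> rw [h5] <;> linarith
    · have key := gg_sum_shape (m+1) (hMap (m+1) σ)
        (fun k => if 2*(k:ℤ)+1 ∈ σ.2 then (1:ℤ) else 0)
      have e1 : ∀ k ∈ (Finset.univ : Finset (Fin (m+1))),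
          hMap (m+1) σ k + 4*((k:ℤ)+1) - 2*((m:ℤ)+1) - 2
            + (if 2*(k:ℤ)+1 ∈ σ.2 then (1:ℤ) else 0)
            + 2 * ∑ i ∈ Finset.Ioi k, (if 2*(i:ℤ)+1 ∈ σ.2 then (1:ℤ) else 0)
          = σ.1 k := by
        intro k _
        simp only [hMap]
        push_cast
        ring
      rw [show ((m:ℤ)+1) = ((m+1 : ℕ) : ℤ) by push_cast; ring] at e1
      rw [Finset.sum_congr rfl e1] at key
      have hν' := gg_sum_sset_snd (m+1) σ.2 hν
      rw [key, hν'] at hsum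
      linarith
  have hrinv : ∀ σ ∈ Sset n (m+1), gMap (m+1) (hMap (m+1) σ) = σ := by
    rintro σ ⟨hanti, hpos, hej, hcard, hν, hsum⟩
    exact gg_gMap_hMap (m+1) σ (fun k => (hej k).1) hν
  exact Set.InvOn.bijOn ⟨fun γ _ => gg_hMap_gMap (m+1) γ, fun σ hσ => hrinv σ hσ⟩ hGS hSG
end

section
/- For every nonnegative integer n, A(n) = C(n), where A(n) is the number of partitions of n whose parts, in decreasing order, satisfy γ_i − γ_{i+1} ≥ 2, with γ_i − γ_{i+1} ≥ 3 whenever γ_i is even, and C(n) is the number of signed partitions of n in which the negative parts are distinct, odd, and smaller in magnitude than twice the number of positive parts, and the positive parts are even and each at least twice the number of positive parts. -/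
/-- The parts of `p` sorted in weakly increasing order. -/
def sortedParts {n : ℕ} (p : n.Partition) : List ℕ := p.parts.sort (· ≤ ·)

/-- A partition is a Göllnitz–Gordon partition if its parts, in decreasing order
`γ₁ ≥ γ₂ ≥ ⋯`, satisfy `γ_i - γ_{i+1} ≥ 2`, with `γ_i - γ_{i+1} ≥ 3` whenever `γ_i`
is even.  (In the increasing sorted list `l`, the larger of two consecutive parts
`l_i ≤ l_{i+1}` plays the role of `γ_i`.) -/
def IsGG {n : ℕ} (p : n.Partition) : Prop :=
  ∀ i : ℕ, ∀ h : i + 1 < (sortedParts p).length,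
    2 ≤ (sortedParts p).get ⟨i + 1, h⟩ - (sortedParts p).get ⟨i, Nat.lt_of_succ_lt h⟩ ∧
    (Even ((sortedParts p).get ⟨i + 1, h⟩) →
      3 ≤ (sortedParts p).get ⟨i + 1, h⟩ - (sortedParts p).get ⟨i, Nat.lt_of_succ_lt h⟩)

/-- `A n` is the number of Göllnitz–Gordon partitions of `n`. -/
noncomputable def A (n : ℕ) : ℕ := Nat.card {p : n.Partition // IsGG p}

/-- A *signed partition* of `n` is a pair of multisets of positive integers
`(π, ν)` (the positive and negative parts) with `|π| - |ν| = n`.  It is an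
*Andrews signed Göllnitz–Gordon partition* if the negative parts are distinct,
odd, and smaller in magnitude than twice the number of positive parts, while the
positive parts are even and each at least twice the number of positive parts. -/
def IsSignedGG (n : ℕ) (s : Multiset ℕ × Multiset ℕ) : Prop :=
  (∀ a ∈ s.1, 0 < a) ∧ (∀ a ∈ s.2, 0 < a) ∧
  (∀ a ∈ s.1, Even a ∧ 2 * Multiset.card s.1 ≤ a) ∧
  s.2.Nodup ∧ (∀ a ∈ s.2, Odd a ∧ a < 2 * Multiset.card s.1) ∧
  (s.1.sum : ℤ) - (s.2.sum : ℤ) = (n : ℤ)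

/-- `C n` is the number of Andrews signed Göllnitz–Gordon partitions of `n`. -/
noncomputable def C (n : ℕ) : ℕ :=
  Nat.card {s : Multiset ℕ × Multiset ℕ // IsSignedGG n s}

namespace GGProof

/-- number of elements of `T` below `j` -/
def tc (T : Finset ℕ) (j : ℕ) : ℕ := (T.filter (· < j)).card

lemma tc_zero (T : Finset ℕ) : tc T 0 = 0 := by simp [tc]

lemma tc_succ (T : Finset ℕ) (j : ℕ) :
    tc T (j+1) = tc T j + (if j ∈ T then 1 else 0) := by
  unfold tc
  rw [Finset.card_filter, Finset.card_filter]
  by_cases hj : j ∈ T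
  · simp only [hj, if_true]
    rw [← Finset.sum_erase_add T _ hj, ← Finset.sum_erase_add T (fun i => if i < j then 1 else 0) hj]
    simp only [lt_irrefl, if_false, if_pos (Nat.lt_succ_self j)]
    have : ∀ x ∈ T.erase j, (if x < j + 1 then (1:ℕ) else 0) = (if x < j then 1 else 0) := by
      intro x hx
      have hxj : x ≠ j := Finset.ne_of_mem_erase hx
      by_cases h : x < j
      · simp [h, Nat.lt_succ_of_lt h]
      · have : ¬ x < j + 1 := by omega
        simp [h, this]
    rw [Finset.sum_congr rfl this]
  · simp only [hj, if_false, add_zero]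
    apply Finset.sum_congr rfl
    intro x hx
    have hxj : x ≠ j := by rintro rfl; exact hj hx
    by_cases h : x < j
    · simp [h, Nat.lt_succ_of_lt h]
    · have : ¬ x < j + 1 := by omega
      simp [h, this]

lemma tc_le (T : Finset ℕ) (j : ℕ) : tc T j ≤ j := by
  have : T.filter (· < j) ⊆ Finset.range j := by
    intro x hx
    simp only [Finset.mem_filter] at hx
    exact Finset.mem_range.2 hx.2
  simpa [tc] using (Finset.card_le_card this).trans (by simp)

lemma sum_ite_lt (x k : ℕ) (h : x < k) :
    ∑ i ∈ Finset.range k, (if x < i then (1:ℕ) else 0) = k - x - 1 := by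
  induction k with
  | zero => omega
  | succ k ih =>
    rw [Finset.sum_range_succ]
    rcases Nat.lt_or_ge x k with h' | h'
    · rw [ih h', if_pos h']; omega
    · have hxk : x = k := by omega
      subst hxk
      have : ∀ i ∈ Finset.range x, (if x < i then (1:ℕ) else 0) = 0 := by
        intro i hi; simp only [Finset.mem_range] at hi; simp [Nat.not_lt.2 (le_of_lt hi)]
      rw [Finset.sum_congr rfl this]
      simp

lemma sum_ite_le (x k : ℕ) (h : x < k) :
    ∑ i ∈ Finset.range k, (if x < i + 1 then (1:ℕ) else 0) = k - x := by
  induction k with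
  | zero => omega
  | succ k ih =>
    rw [Finset.sum_range_succ]
    rcases Nat.lt_or_ge x k with h' | h'
    · rw [ih h', if_pos (by omega)]; omega
    · have hxk : x = k := by omega
      subst hxk
      have : ∀ i ∈ Finset.range x, (if x < i + 1 then (1:ℕ) else 0) = 0 := by
        intro i hi; simp only [Finset.mem_range] at hi; simp [show ¬ x < i + 1 by omega]
      rw [Finset.sum_congr rfl this, if_pos (by omega)]
      simp

lemma tc_eq_sum (T : Finset ℕ) (j : ℕ) :
    tc T j = ∑ x ∈ T, (if x < j then (1:ℕ) else 0) := Finset.card_filter _ _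

lemma tc_sum {k : ℕ} {T : Finset ℕ} (hT : T ⊆ Finset.range k) :
    ∑ i ∈ Finset.range k, (tc T (i+1) + tc T i) = ∑ j ∈ T, (2*(k-1-j)+1) := by
  have : ∀ i, tc T (i+1) + tc T i
      = ∑ x ∈ T, ((if x < i + 1 then (1:ℕ) else 0) + (if x < i then 1 else 0)) := by
    intro i; rw [tc_eq_sum, tc_eq_sum, Finset.sum_add_distrib]
  rw [Finset.sum_congr rfl (fun i _ => this i), Finset.sum_comm]
  apply Finset.sum_congr rfl
  intro x hx
  have hxk : x < k := Finset.mem_range.1 (hT hx)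
  rw [Finset.sum_add_distrib, sum_ite_lt x k hxk, sum_ite_le x k hxk]
  omega

lemma sum_4i2 (k : ℕ) : ∑ i ∈ Finset.range k, (4*i+2) = 2*(k*k) := by
  induction k with
  | zero => simp
  | succ k ih => rw [Finset.sum_range_succ, ih]; ring


/-- the Göllnitz–Gordon part built from the signed data -/
def gam (k : ℕ) (q : ℕ → ℕ) (T : Finset ℕ) (i : ℕ) : ℕ :=
  q i + 4*i + 2 - (2*k + tc T (i+1) + tc T i)

/-- the signed positive part built from the Göllnitz–Gordon data -/
def qum (k : ℕ) (g : ℕ → ℕ) (T : Finset ℕ) (i : ℕ) : ℕ :=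
  g i + 2*k + tc T (i+1) + tc T i - (4*i + 2)

section QtoG
variable {k : ℕ} {q : ℕ → ℕ} {T : Finset ℕ}
  (hbig : ∀ i < k, 2*k ≤ q i)

include hbig

lemma g1 {i : ℕ} (hi : i < k) :
    gam k q T i + (2*k + tc T (i+1) + tc T i) = q i + 4*i + 2 := by
  have h1 := tc_le T (i+1); have h2 := tc_le T i; have := hbig i hi
  unfold gam; omega

lemma g2 (hmono : ∀ i j, i ≤ j → j < k → q i ≤ q j) {i : ℕ} (hi : i + 1 < k) :
    gam k q T i + 4 + tc T (i+1) + tc T i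
      ≤ gam k q T (i+1) + tc T (i+2) + tc T (i+1) := by
  have e1 := g1 (T := T) hbig (Nat.lt_of_succ_lt hi)
  have e2 := g1 (T := T) hbig hi
  have hq := hmono i (i+1) (by omega) hi
  have hfix : tc T (i+1+1) = tc T (i+2) := rfl
  omega

lemma g3 (heven : ∀ i < k, Even (q i)) {i : ℕ} (hi : i < k) :
    Odd (gam k q T i) ↔ i ∈ T := by
  have e1 := g1 (T := T) hbig hi
  have s1 := tc_succ T i
  obtain ⟨m, hm⟩ := heven i hi
  rw [Nat.odd_iff]
  by_cases h : i ∈ T <;> simp only [h, if_true, if_false, iff_true, iff_false] at s1 ⊢ <;> omega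

lemma g4 {i : ℕ} (hi : i < k) : 2*i + 1 ≤ gam k q T i := by
  have e1 := g1 (T := T) hbig hi
  have hb := hbig i hi
  have h1 := tc_le T (i+1); have h2 := tc_le T i
  omega

lemma g6 (hT : T ⊆ Finset.range k) :
    ∑ i ∈ Finset.range k, gam k q T i + ∑ j ∈ T, (2*(k-1-j)+1)
      = ∑ i ∈ Finset.range k, q i := by
  have h1 : ∑ i ∈ Finset.range k, (gam k q T i + (2*k + tc T (i+1) + tc T i))
      = ∑ i ∈ Finset.range k, (q i + 4*i + 2) :=
    Finset.sum_congr rfl (fun i hi => g1 hbig (Finset.mem_range.1 hi))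
  have h2 : ∑ i ∈ Finset.range k, (q i + 4*i + 2)
      = ∑ i ∈ Finset.range k, q i + ∑ i ∈ Finset.range k, (4*i+2) := by
    rw [← Finset.sum_add_distrib]; apply Finset.sum_congr rfl; intros; ring
  have h3 : ∑ i ∈ Finset.range k, (gam k q T i + (2*k + tc T (i+1) + tc T i))
      = ∑ i ∈ Finset.range k, gam k q T i + (∑ i ∈ Finset.range k, (2*k)
        + ∑ i ∈ Finset.range k, (tc T (i+1) + tc T i)) := by
    rw [← Finset.sum_add_distrib, ← Finset.sum_add_distrib]
    apply Finset.sum_congr rfl; intros; ring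
  have h4 : ∑ _i ∈ Finset.range k, (2*k) = 2*(k*k) := by
    rw [Finset.sum_const, Finset.card_range, smul_eq_mul]; ring
  rw [h3, h4, tc_sum hT] at h1
  rw [h2, sum_4i2] at h1
  omega

end QtoG

section GtoQ
variable {k : ℕ} {g : ℕ → ℕ}

/-- the odd positions -/
def TG (k : ℕ) (g : ℕ → ℕ) : Finset ℕ := (Finset.range k).filter (fun i => Odd (g i))

lemma TG_subset : TG k g ⊆ Finset.range k := Finset.filter_subset _ _

lemma mem_TG {i : ℕ} : i ∈ TG k g ↔ i < k ∧ Odd (g i) := by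
  simp [TG, Finset.mem_filter, Finset.mem_range]

variable (hgap : ∀ i, i + 1 < k → (2 ≤ g (i+1) - g i ∧ (Even (g (i+1)) → 3 ≤ g (i+1) - g i)))

include hgap

lemma G2 {i : ℕ} (hi : i + 1 < k) :
    g i + 4 + tc (TG k g) (i+1) + tc (TG k g) i
      ≤ g (i+1) + tc (TG k g) (i+2) + tc (TG k g) (i+1) := by
  obtain ⟨hg2, hg3⟩ := hgap i hi
  have m1 : (i + 1 ∈ TG k g) ↔ Odd (g (i+1)) := by rw [mem_TG]; exact and_iff_right hi
  have m0 : (i ∈ TG k g) ↔ Odd (g i) := by rw [mem_TG]; exact and_iff_right (by omega)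
  have s1 := tc_succ (TG k g) (i+1)
  have s0 := tc_succ (TG k g) i
  have hfix : tc (TG k g) (i+1+1) = tc (TG k g) (i+2) := rfl
  by_cases h1 : (i+1) ∈ TG k g <;> by_cases h0 : i ∈ TG k g <;>
    simp only [h1, h0, if_true, if_false] at s1 s0
  · have p1 := Nat.odd_iff.1 (m1.1 h1); have p0 := Nat.odd_iff.1 (m0.1 h0); omega
  · have p1 := Nat.odd_iff.1 (m1.1 h1)
    have p0 := Nat.even_iff.1 (Nat.not_odd_iff_even.1 (fun ho => h0 (m0.2 ho)))
    omega
  · have p1 := Nat.even_iff.1 (Nat.not_odd_iff_even.1 (fun ho => h1 (m1.2 ho)))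
    have p0 := Nat.odd_iff.1 (m0.1 h0)
    have h3 := hg3 (Nat.not_odd_iff_even.1 (fun ho => h1 (m1.2 ho)))
    omega
  · have p1 := Nat.even_iff.1 (Nat.not_odd_iff_even.1 (fun ho => h1 (m1.2 ho)))
    have p0 := Nat.even_iff.1 (Nat.not_odd_iff_even.1 (fun ho => h0 (m0.2 ho)))
    have h3 := hg3 (Nat.not_odd_iff_even.1 (fun ho => h1 (m1.2 ho)))
    omega

lemma G4 (hpos : ∀ i < k, 1 ≤ g i) :
    ∀ i < k, 4*i + 2 ≤ g i + tc (TG k g) (i+1) + tc (TG k g) i := by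
  intro i
  induction i with
  | zero =>
    intro h0
    have t0 : tc (TG k g) 0 = 0 := by simp [tc]
    have s1 := tc_succ (TG k g) 0
    have m0 : (0 ∈ TG k g) ↔ Odd (g 0) := by rw [mem_TG]; exact and_iff_right h0
    have hp := hpos 0 h0
    by_cases h : 0 ∈ TG k g
    · simp only [h, if_true] at s1; omega
    · simp only [h, if_false] at s1
      have p0 := Nat.even_iff.1 (Nat.not_odd_iff_even.1 (fun ho => h (m0.2 ho)))
      omega
  | succ i ih =>
    intro hi
    have hstep := G2 hgap hi
    have hprev := ih (by omega)
    have hfix : tc (TG k g) (i+1+1) = tc (TG k g) (i+2) := rfl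
    omega

variable (hpos : ∀ i < k, 1 ≤ g i)
include hpos

lemma Q1 {i : ℕ} (hi : i < k) :
    qum k g (TG k g) i + (4*i + 2) = g i + 2*k + tc (TG k g) (i+1) + tc (TG k g) i := by
  have := G4 hgap hpos i hi
  unfold qum; omega

lemma Qbig {i : ℕ} (hi : i < k) : 2*k ≤ qum k g (TG k g) i := by
  have e := Q1 hgap hpos hi
  have h := G4 hgap hpos i hi
  omega

lemma Qeven {i : ℕ} (hi : i < k) : Even (qum k g (TG k g) i) := by
  have e := Q1 hgap hpos hi
  have s1 := tc_succ (TG k g) i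
  have m0 : (i ∈ TG k g) ↔ Odd (g i) := by rw [mem_TG]; exact and_iff_right hi
  rw [Nat.even_iff]
  by_cases h : Odd (g i)
  · simp only [m0, h, if_true] at s1
    rw [Nat.odd_iff] at h; omega
  · rw [Nat.odd_iff] at h
    simp only [m0, Nat.odd_iff, h, if_false] at s1
    omega

lemma Qmono {i : ℕ} (hi : i + 1 < k) : qum k g (TG k g) i ≤ qum k g (TG k g) (i+1) := by
  have e1 := Q1 hgap hpos (Nat.lt_of_succ_lt hi)
  have e2 := Q1 hgap hpos hi
  have hstep := G2 hgap hi
  have hfix : tc (TG k g) (i+1+1) = tc (TG k g) (i+2) := rfl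
  omega

lemma Qsum :
    ∑ i ∈ Finset.range k, qum k g (TG k g) i
      = ∑ i ∈ Finset.range k, g i + ∑ j ∈ TG k g, (2*(k-1-j)+1) := by
  have h1 : ∑ i ∈ Finset.range k, (qum k g (TG k g) i + (4*i + 2))
      = ∑ i ∈ Finset.range k, (g i + 2*k + tc (TG k g) (i+1) + tc (TG k g) i) :=
    Finset.sum_congr rfl (fun i hi => Q1 hgap hpos (Finset.mem_range.1 hi))
  have h3 : ∑ i ∈ Finset.range k, (g i + 2*k + tc (TG k g) (i+1) + tc (TG k g) i)
      = ∑ i ∈ Finset.range k, g i + (∑ _i ∈ Finset.range k, (2*k)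
        + ∑ i ∈ Finset.range k, (tc (TG k g) (i+1) + tc (TG k g) i)) := by
    rw [← Finset.sum_add_distrib, ← Finset.sum_add_distrib]
    apply Finset.sum_congr rfl; intros; ring
  have h4 : ∑ _i ∈ Finset.range k, (2*k) = 2*(k*k) := by
    rw [Finset.sum_const, Finset.card_range, smul_eq_mul]; ring
  rw [Finset.sum_add_distrib, sum_4i2, h3, h4, tc_sum (TG_subset (k := k) (g := g))] at h1
  omega

end GtoQ


def LL (k : ℕ) (f : ℕ → ℕ) : List ℕ := (List.range k).map f

lemma LL_length (k : ℕ) (f : ℕ → ℕ) : (LL k f).length = k := by simp [LL]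

lemma LL_getElem (k : ℕ) (f : ℕ → ℕ) {i : ℕ} (hi : i < (LL k f).length) :
    (LL k f)[i] = f i := by
  simp [LL]

lemma LL_getD (k : ℕ) (f : ℕ → ℕ) {i : ℕ} (hi : i < k) :
    (LL k f).getD i 0 = f i := by
  rw [List.getD_eq_getElem _ _ (by simpa [LL_length] using hi), LL_getElem]

lemma mono_step {k : ℕ} {f : ℕ → ℕ} (hf : ∀ i, i + 1 < k → f i ≤ f (i+1)) :
    ∀ i j, i ≤ j → j < k → f i ≤ f j := by
  intro i j
  induction j with
  | zero => intro h _; exact Nat.le_zero.1 h ▸ le_refl _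
  | succ j ih =>
    intro hij hj
    rcases Nat.lt_or_ge i (j+1) with h | h
    · exact le_trans (ih (by omega) (by omega)) (hf j hj)
    · have : i = j + 1 := by omega
      exact this ▸ le_refl _

lemma LL_sorted {k : ℕ} {f : ℕ → ℕ} (hf : ∀ i, i + 1 < k → f i ≤ f (i+1)) :
    (LL k f).Pairwise (· ≤ ·) := by
  rw [List.pairwise_iff_get]
  intro i j hij
  rw [List.get_eq_getElem, List.get_eq_getElem, LL_getElem, LL_getElem]
  exact mono_step hf i j (le_of_lt hij) (by simpa [LL] using j.2)

lemma sort_of_sorted {l : List ℕ} (h : l.Pairwise (· ≤ ·)) :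
    Multiset.sort (↑l : Multiset ℕ) (· ≤ ·) = l := by
  apply List.Perm.eq_of_pairwise' (Multiset.pairwise_sort _ _) h
  exact Multiset.coe_eq_coe.1 (Multiset.sort_eq _ _)

lemma sum_LL (k : ℕ) (f : ℕ → ℕ) : (LL k f).sum = ∑ i ∈ Finset.range k, f i := by
  induction k with
  | zero => simp [LL]
  | succ k ih =>
    rw [Finset.sum_range_succ, ← ih]
    simp [LL, List.range_succ]

lemma mem_LL {k : ℕ} {f : ℕ → ℕ} {a : ℕ} : a ∈ LL k f ↔ ∃ i < k, f i = a := by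
  simp [LL]

lemma sorted_getD_mono {l : List ℕ} (h : l.Pairwise (· ≤ ·)) {i j : ℕ}
    (hij : i ≤ j) (hj : j < l.length) : l.getD i 0 ≤ l.getD j 0 := by
  rcases Nat.eq_or_lt_of_le hij with rfl | hlt
  · exact le_refl _
  · rw [List.getD_eq_getElem _ _ (lt_trans hlt hj), List.getD_eq_getElem _ _ hj]
    exact List.pairwise_iff_get.1 h ⟨i, lt_trans hlt hj⟩ ⟨j, hj⟩ hlt

lemma getD_mem {l : List ℕ} {i : ℕ} (hi : i < l.length) : l.getD i 0 ∈ l := by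
  rw [List.getD_eq_getElem _ _ hi]
  exact List.getElem_mem _

lemma getD_reconstruct (l : List ℕ) : LL l.length (fun i => l.getD i 0) = l := by
  apply List.ext_getElem (by simp [LL_length])
  intro i h1 h2
  rw [LL_getElem, List.getD_eq_getElem]

lemma sum_eq_sum_getD (l : List ℕ) :
    l.sum = ∑ i ∈ Finset.range l.length, l.getD i 0 := by
  conv_lhs => rw [← getD_reconstruct l]
  exact sum_LL _ _

lemma tc_succ_le (T : Finset ℕ) (j : ℕ) :
    tc T j ≤ tc T (j+1) ∧ tc T (j+1) ≤ tc T j + 1 := by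
  have := tc_succ T j
  by_cases h : j ∈ T <;> simp only [h, if_true, if_false] at this <;> omega


/-! ### the forward map: signed partitions to Göllnitz–Gordon partitions -/

def kOf (s : Multiset ℕ × Multiset ℕ) : ℕ := Multiset.card s.1
def qOf (s : Multiset ℕ × Multiset ℕ) (i : ℕ) : ℕ := (Multiset.sort s.1 (· ≤ ·)).getD i 0
def TOf (s : Multiset ℕ × Multiset ℕ) : Finset ℕ := s.2.toFinset.image (fun a => kOf s - 1 - a/2)
def gOf (s : Multiset ℕ × Multiset ℕ) : ℕ → ℕ := gam (kOf s) (qOf s) (TOf s)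

section Fwd
variable {n : ℕ} {s : Multiset ℕ × Multiset ℕ} (hs : IsSignedGG n s)

lemma qOf_mem {i : ℕ} (hi : i < kOf s) : qOf s i ∈ s.1 := by
  rw [← Multiset.mem_sort (r := (· ≤ ·))]
  exact getD_mem (by rwa [Multiset.length_sort])

include hs

lemma qOf_big : ∀ i < kOf s, 2 * kOf s ≤ qOf s i :=
  fun _ hi => (hs.2.2.1 _ (qOf_mem hi)).2

lemma qOf_even : ∀ i < kOf s, Even (qOf s i) :=
  fun _ hi => (hs.2.2.1 _ (qOf_mem hi)).1

omit hs in
lemma qOf_mono : ∀ i j, i ≤ j → j < kOf s → qOf s i ≤ qOf s j := by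
  intro i j hij hj
  exact sorted_getD_mono (Multiset.pairwise_sort _ _) hij (by rwa [Multiset.length_sort])

lemma k_pos_of_mem2 {a : ℕ} (ha : a ∈ s.2) : 1 ≤ kOf s := by
  have := (hs.2.2.2.2.1 a ha).2
  unfold kOf; omega

lemma TOf_subset : TOf s ⊆ Finset.range (kOf s) := by
  intro x hx
  rcases Finset.mem_image.1 hx with ⟨a, ha, rfl⟩
  have hk := k_pos_of_mem2 hs (Multiset.mem_toFinset.1 ha)
  exact Finset.mem_range.2 (by omega)

lemma S_eq : s.2 = (TOf s).val.map (fun j => 2*(kOf s - 1 - j)+1) := by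
  have hnd := hs.2.2.2.1
  have hodd := hs.2.2.2.2.1
  have hmapnd : ((TOf s).val.map (fun j => 2*(kOf s - 1 - j)+1)).Nodup := by
    apply Multiset.Nodup.map_on _ (TOf s).nodup
    intro x hx y hy hxy
    have hx' := Finset.mem_range.1 (TOf_subset hs (Finset.mem_val.mp hx))
    have hy' := Finset.mem_range.1 (TOf_subset hs (Finset.mem_val.mp hy))
    omega
  rw [Multiset.Nodup.ext hnd hmapnd]
  intro a
  constructor
  · intro ha
    obtain ⟨hoa, hlt⟩ := hodd a ha
    have hk := k_pos_of_mem2 hs ha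
    have hmod := Nat.odd_iff.1 hoa
    have hk2 : kOf s = Multiset.card s.1 := rfl
    refine Multiset.mem_map.2 ⟨kOf s - 1 - a/2, Finset.mem_val.mpr
      (Finset.mem_image.2 ⟨a, Multiset.mem_toFinset.2 ha, rfl⟩), by omega⟩
  · intro hb
    rcases Multiset.mem_map.1 hb with ⟨j, hj, rfl⟩
    rcases Finset.mem_image.1 (Finset.mem_val.mp hj) with ⟨a, ha', rfl⟩
    have ha := Multiset.mem_toFinset.1 ha'
    obtain ⟨hoa, hlt⟩ := hodd a ha
    have hk := k_pos_of_mem2 hs ha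
    have hmod := Nat.odd_iff.1 hoa
    have hk2 : kOf s = Multiset.card s.1 := rfl
    have : 2*(kOf s - 1 - (kOf s - 1 - a/2))+1 = a := by omega
    rwa [this]

lemma S_sum : s.2.sum = ∑ j ∈ TOf s, (2*(kOf s - 1 - j)+1) := by
  rw [S_eq hs]; rfl

omit hs in
lemma sort_eq_LL : Multiset.sort s.1 (· ≤ ·) = LL (kOf s) (qOf s) := by
  have h := getD_reconstruct (Multiset.sort s.1 (· ≤ ·))
  rw [Multiset.length_sort] at h
  exact h.symm

omit hs in
lemma s1_eq : s.1 = ↑(LL (kOf s) (qOf s)) := by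
  rw [← sort_eq_LL, Multiset.sort_eq]

omit hs in
lemma s1_sum : s.1.sum = ∑ i ∈ Finset.range (kOf s), qOf s i := by
  conv_lhs => rw [s1_eq (s := s)]
  rw [Multiset.sum_coe, sum_LL]

lemma q_sum : ∑ i ∈ Finset.range (kOf s), qOf s i
    = n + ∑ j ∈ TOf s, (2*(kOf s - 1 - j)+1) := by
  have h6 := hs.2.2.2.2.2
  rw [s1_sum, S_sum hs] at h6
  omega

def fwdP (hs : IsSignedGG n s) : n.Partition where
  parts := ↑(LL (kOf s) (gOf s))
  parts_pos := by
    intro i hi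
    rcases mem_LL.1 (by exact_mod_cast hi) with ⟨j, hj, rfl⟩
    have := g4 (T := TOf s) (qOf_big hs) hj
    unfold gOf
    omega
  parts_sum := by
    have h6 := g6 (T := TOf s) (qOf_big hs) (TOf_subset hs)
    have hq := q_sum hs
    rw [Multiset.sum_coe, sum_LL]
    unfold gOf
    omega

lemma gOf_step {i : ℕ} (hi : i + 1 < kOf s) : gOf s i + 2 ≤ gOf s (i+1) := by
  have h2 := g2 (T := TOf s) (qOf_big hs) qOf_mono hi
  have t1 := tc_succ_le (TOf s) i
  have t2 := tc_succ_le (TOf s) (i+1)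
  have hfix : tc (TOf s) (i+1+1) = tc (TOf s) (i+2) := rfl
  unfold gOf
  omega

lemma sortedParts_fwd : sortedParts (fwdP hs) = LL (kOf s) (gOf s) := by
  show Multiset.sort (↑(LL (kOf s) (gOf s)) : Multiset ℕ) (· ≤ ·) = _
  exact sort_of_sorted (LL_sorted (fun i hi => by have := gOf_step hs hi; omega))

lemma isGG_fwd : IsGG (fwdP hs) := by
  intro i h
  have hk : i + 1 < kOf s := by
    have := h; rwa [sortedParts_fwd hs, LL_length] at this
  have e1 : (sortedParts (fwdP hs)).get ⟨i+1, h⟩ = gOf s (i+1) := by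
    rw [List.get_eq_getElem]
    simp only [sortedParts_fwd hs]
    rw [LL_getElem]
  have e0 : (sortedParts (fwdP hs)).get ⟨i, Nat.lt_of_succ_lt h⟩ = gOf s i := by
    rw [List.get_eq_getElem]
    simp only [sortedParts_fwd hs]
    rw [LL_getElem]
  rw [e1, e0]
  constructor
  · have := gOf_step hs hk; omega
  · intro hev
    have hnotmem : (i+1) ∉ TOf s := by
      rw [← g3 (T := TOf s) (qOf_big hs) (qOf_even hs) hk]
      exact fun ho => (Nat.not_odd_iff_even.2 hev) ho
    have h2 := g2 (T := TOf s) (qOf_big hs) qOf_mono hk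
    have s2 := tc_succ (TOf s) (i+1)
    simp only [hnotmem, if_false] at s2
    have t1 := tc_succ_le (TOf s) i
    have hfix : tc (TOf s) (i+1+1) = tc (TOf s) (i+2) := rfl
    unfold gOf
    omega

end Fwd

/-! ### the backward map -/

def kP {n : ℕ} (p : n.Partition) : ℕ := (sortedParts p).length
def gP {n : ℕ} (p : n.Partition) (i : ℕ) : ℕ := (sortedParts p).getD i 0
def TP {n : ℕ} (p : n.Partition) : Finset ℕ := TG (kP p) (gP p)
def qP {n : ℕ} (p : n.Partition) : ℕ → ℕ := qum (kP p) (gP p) (TP p)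
def bwdS {n : ℕ} (p : n.Partition) : Multiset ℕ × Multiset ℕ :=
  (↑(LL (kP p) (qP p)), (TP p).val.map (fun j => 2*(kP p - 1 - j)+1))

section Bwd
variable {n : ℕ} {p : n.Partition} (hp : IsGG p)

lemma gP_pos : ∀ i < kP p, 1 ≤ gP p i := by
  intro i hi
  exact p.parts_pos (Multiset.mem_sort (r := (· ≤ ·)) |>.1 (getD_mem hi))

include hp

lemma gP_gap : ∀ i, i + 1 < kP p →
    (2 ≤ gP p (i+1) - gP p i ∧ (Even (gP p (i+1)) → 3 ≤ gP p (i+1) - gP p i)) := by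
  intro i hi
  have h := hp i hi
  have e1 : (sortedParts p).get ⟨i+1, hi⟩ = gP p (i+1) := by
    rw [List.get_eq_getElem, gP, List.getD_eq_getElem _ _ hi]; rfl
  have e0 : (sortedParts p).get ⟨i, Nat.lt_of_succ_lt hi⟩ = gP p i := by
    rw [List.get_eq_getElem, gP, List.getD_eq_getElem _ _ (Nat.lt_of_succ_lt hi)]
  rwa [e1, e0] at h

omit hp in
lemma g_sum : ∑ i ∈ Finset.range (kP p), gP p i = n := by
  have h1 : (sortedParts p).sum = ∑ i ∈ Finset.range (kP p), gP p i := sum_eq_sum_getD _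
  have h2 : (↑(sortedParts p) : Multiset ℕ) = p.parts := Multiset.sort_eq _ _
  have h3 : (↑(sortedParts p) : Multiset ℕ).sum = p.parts.sum := by rw [h2]
  rw [Multiset.sum_coe, h1, p.parts_sum] at h3
  omega

lemma isSigned_bwd : IsSignedGG n (bwdS p) := by
  have hgap := gP_gap hp
  have hpos := gP_pos (p := p)
  have hcard : Multiset.card (bwdS p).1 = kP p := by
    show Multiset.card (↑(LL (kP p) (qP p)) : Multiset ℕ) = _
    rw [Multiset.coe_card, LL_length]
  refine ⟨?_, ?_, ?_, ?_, ?_, ?_⟩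
  · intro a ha
    rcases mem_LL.1 (by exact_mod_cast ha) with ⟨i, hi, rfl⟩
    have h := Qbig hgap hpos hi
    unfold qP TP
    omega
  · intro a ha
    have ha' : a ∈ (TP p).val.map (fun j => 2*(kP p - 1 - j)+1) := ha
    rcases Multiset.mem_map.1 ha' with ⟨j, hj, rfl⟩
    omega
  · intro a ha
    rcases mem_LL.1 (by exact_mod_cast ha) with ⟨i, hi, rfl⟩
    rw [hcard]
    exact ⟨Qeven hgap hpos hi, Qbig hgap hpos hi⟩
  · show ((TP p).val.map (fun j => 2*(kP p - 1 - j)+1)).Nodup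
    apply Multiset.Nodup.map_on _ (TP p).nodup
    intro x hx y hy hxy
    have hx' := Finset.mem_range.1 (TG_subset (Finset.mem_val.mp hx))
    have hy' := Finset.mem_range.1 (TG_subset (Finset.mem_val.mp hy))
    omega
  · intro a ha
    have ha' : a ∈ (TP p).val.map (fun j => 2*(kP p - 1 - j)+1) := ha
    rcases Multiset.mem_map.1 ha' with ⟨j, hj, rfl⟩
    have hj' := Finset.mem_range.1 (TG_subset (Finset.mem_val.mp hj))
    rw [hcard]
    constructor
    · exact ⟨kP p - 1 - j, by omega⟩
    · omega
  · have hq := Qsum hgap hpos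
    have hg := g_sum (n := n) (p := p)
    have e1 : (bwdS p).1.sum
        = ∑ i ∈ Finset.range (kP p), qum (kP p) (gP p) (TG (kP p) (gP p)) i := by
      show (↑(LL (kP p) (qP p)) : Multiset ℕ).sum = _
      rw [Multiset.sum_coe, sum_LL]; rfl
    have e2 : (bwdS p).2.sum = ∑ j ∈ TG (kP p) (gP p), (2*(kP p - 1 - j)+1) := rfl
    have key : (bwdS p).1.sum = n + (bwdS p).2.sum := by rw [e1, e2]; omega
    rw [key]
    push_cast
    ring

end Bwd

section RoundTrips
variable {n : ℕ}

lemma fwd_bwd (p : n.Partition) (hp : IsGG p) : fwdP (isSigned_bwd hp) = p := by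
  have hgap := gP_gap hp
  have hpos := gP_pos (p := p)
  have hkk : kOf (bwdS p) = kP p := by
    show Multiset.card (↑(LL (kP p) (qP p)) : Multiset ℕ) = _
    rw [Multiset.coe_card, LL_length]
  have hq : ∀ i < kP p, qOf (bwdS p) i
      = qum (kP p) (gP p) (TG (kP p) (gP p)) i := by
    intro i hi
    unfold qOf
    have h1 : (bwdS p).1 = ↑(LL (kP p) (qP p)) := rfl
    rw [h1, sort_of_sorted (LL_sorted (k := kP p) (f := qP p) (fun i hi => Qmono hgap hpos hi)), LL_getD _ _ hi]
    rfl
  have hT : TOf (bwdS p) = TG (kP p) (gP p) := by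
    ext j
    unfold TOf
    rw [Finset.mem_image]
    constructor
    · rintro ⟨a, ha', rfl⟩
      have ha'' : a ∈ (TP p).val.map (fun j => 2*(kP p - 1 - j)+1) :=
        Multiset.mem_toFinset.1 ha'
      rcases Multiset.mem_map.1 ha'' with ⟨j', hj', rfl⟩
      have hjr := Finset.mem_range.1 (TG_subset (Finset.mem_val.mp hj'))
      have : kOf (bwdS p) - 1 - (2*(kP p - 1 - j')+1)/2 = j' := by rw [hkk]; omega
      rw [this]
      exact Finset.mem_val.mp hj'
    · intro hj
      have hjr := Finset.mem_range.1 (TG_subset hj)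
      refine ⟨2*(kP p - 1 - j)+1, Multiset.mem_toFinset.2
        (show _ ∈ (TP p).val.map (fun j => 2*(kP p - 1 - j)+1) from
          Multiset.mem_map.2 ⟨j, Finset.mem_val.mpr hj, rfl⟩), by rw [hkk]; omega⟩
  have hg : ∀ i < kP p, gOf (bwdS p) i = gP p i := by
    intro i hi
    have hQ1 := Q1 hgap hpos hi
    unfold gOf gam
    rw [hkk, hT, hq i hi]
    omega
  apply Nat.Partition.ext
  show (↑(LL (kOf (bwdS p)) (gOf (bwdS p))) : Multiset ℕ) = p.parts
  have hlist : LL (kOf (bwdS p)) (gOf (bwdS p)) = sortedParts p := by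
    apply List.ext_getElem (by rw [LL_length, hkk]; rfl)
    intro i h1 h2
    have hi : i < kP p := by rwa [LL_length, hkk] at h1
    rw [LL_getElem, hg i hi]
    exact List.getD_eq_getElem _ _ h2
  rw [hlist]
  exact Multiset.sort_eq _ _

lemma bwd_fwd (s : Multiset ℕ × Multiset ℕ) (hs : IsSignedGG n s) :
    bwdS (fwdP hs) = s := by
  set P := fwdP hs with hP
  have hsp : sortedParts P = LL (kOf s) (gOf s) := sortedParts_fwd hs
  have hk : kP P = kOf s := by rw [kP, hsp, LL_length]
  have hgv : ∀ i < kOf s, gP P i = gOf s i := by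
    intro i hi
    rw [gP, hsp, LL_getD _ _ hi]
  have hT : TP P = TOf s := by
    ext j
    rw [show TP P = TG (kP P) (gP P) from rfl, mem_TG]
    constructor
    · rintro ⟨hj, ho⟩
      have hj' : j < kOf s := hk ▸ hj
      rw [hgv j hj'] at ho
      exact (g3 (T := TOf s) (qOf_big hs) (qOf_even hs) hj').1 ho
    · intro hj
      have hj' : j < kOf s := Finset.mem_range.1 (TOf_subset hs hj)
      refine ⟨by rw [hk]; exact hj', ?_⟩
      rw [hgv j hj']
      exact (g3 (T := TOf s) (qOf_big hs) (qOf_even hs) hj').2 hj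
  have hqv : ∀ i < kOf s, qP P i = qOf s i := by
    intro i hi
    have e0 : qP P i = qum (kOf s) (gOf s) (TOf s) i := by
      unfold qP qum
      rw [hk, hgv i hi, hT]
    rw [e0]
    have h1 := g1 (T := TOf s) (qOf_big hs) hi
    unfold qum gOf at *
    omega
  have h1 : (bwdS P).1 = s.1 := by
    show (↑(LL (kP P) (qP P)) : Multiset ℕ) = s.1
    have hlist : LL (kP P) (qP P) = Multiset.sort s.1 (· ≤ ·) := by
      apply List.ext_getElem (by rw [LL_length, hk, Multiset.length_sort]; rfl)
      intro i hh1 hh2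
      have hi : i < kOf s := by rwa [LL_length, hk] at hh1
      rw [LL_getElem, hqv i hi]
      exact List.getD_eq_getElem _ _ hh2
    rw [hlist, Multiset.sort_eq]
  have h2 : (bwdS P).2 = s.2 := by
    show (TP P).val.map (fun j => 2*(kP P - 1 - j)+1) = s.2
    rw [hk, hT]
    exact (S_eq hs).symm
  exact Prod.ext h1 h2

end RoundTrips

noncomputable def equivGG (n : ℕ) :
    {p : n.Partition // IsGG p} ≃ {s : Multiset ℕ × Multiset ℕ // IsSignedGG n s} where
  toFun p := ⟨bwdS p.1, isSigned_bwd p.2⟩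
  invFun s := ⟨fwdP s.2, isGG_fwd s.2⟩
  left_inv p := Subtype.ext (fwd_bwd p.1 p.2)
  right_inv s := Subtype.ext (bwd_fwd s.1 s.2)

end GGProof

/-- The number of ordinary Göllnitz–Gordon partitions of `n` equals the number of
signed Göllnitz–Gordon partitions of `n`. -/
theorem gg_eq_signed_gg (n : ℕ) : A n = C n := by
  unfold A C
  exact Nat.card_congr (GGProof.equivGG n)
end

section
/- Let j ≥ 1 and let γ = (γ₁, …, γ_j) be positive integers satisfying γ_i − γ_{i+1} ≥ 2 for 1 ≤ i ≤ j−1 and γ_i − γ_{i+1} ≥ 3 whenever γ_i is even. Define π_k = γ_k + 4k − 2j − 2 + P(γ_k) + 2·∑_{i=k+1}^{j} P(γ_i) for 1 ≤ k ≤ j. Then π₁ ≥ π₂ ≥ ⋯ ≥ π_j. -/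
/-- Claim 2: `π₁ ≥ π₂ ≥ ⋯ ≥ π_j`.  (Indices are 0-based.) -/
theorem pi_decreasing (j : ℕ) (hj : 1 ≤ j) (γ : Fin j → ℤ)
    (hpos : ∀ k, 1 ≤ γ k)
    (hgap : ∀ i : ℕ, ∀ h : i + 1 < j,
      2 ≤ γ ⟨i, Nat.lt_of_succ_lt h⟩ - γ ⟨i + 1, h⟩ ∧
      (Even (γ ⟨i, Nat.lt_of_succ_lt h⟩) →
        3 ≤ γ ⟨i, Nat.lt_of_succ_lt h⟩ - γ ⟨i + 1, h⟩))
    (π : Fin j → ℤ)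
    (hπ : ∀ k : Fin j, π k = γ k + 4 * ((k : ℤ) + 1) - 2 * (j : ℤ) - 2 + P (γ k)
      + 2 * ∑ i ∈ Finset.Ioi k, P (γ i)) :
    ∀ i : ℕ, ∀ h : i + 1 < j, π ⟨i + 1, h⟩ ≤ π ⟨i, Nat.lt_of_succ_lt h⟩ := by
  intro i h
  set a := γ ⟨i, Nat.lt_of_succ_lt h⟩ with ha'
  set b := γ ⟨i + 1, h⟩ with hb'
  have hins : Finset.Ioi (⟨i, Nat.lt_of_succ_lt h⟩ : Fin j)
      = insert ⟨i + 1, h⟩ (Finset.Ioi (⟨i + 1, h⟩ : Fin j)) := by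
    ext x
    simp only [Finset.mem_Ioi, Finset.mem_insert, Fin.lt_def, Fin.ext_iff]
    omega
  have hsum : ∑ k ∈ Finset.Ioi (⟨i, Nat.lt_of_succ_lt h⟩ : Fin j), P (γ k)
      = P b + ∑ k ∈ Finset.Ioi (⟨i + 1, h⟩ : Fin j), P (γ k) := by
    rw [hins, Finset.sum_insert (by simp)]
  have hgap1 := (hgap i h).1
  have hgap2 := (hgap i h).2
  rw [hπ, hπ, hsum]
  push_cast
  have key : 4 - P a - P b ≤ a - b := by
    by_cases hea : Even a <;> by_cases heb : Even b <;>
      simp only [P, hea, heb, if_true, if_false, if_pos, if_neg, not_false_iff]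
    · have h3 := hgap2 hea
      have : Even (a - b) := hea.sub heb
      obtain ⟨c, hc⟩ := this
      omega
    · have h3 := hgap2 hea
      omega
    · rw [Int.not_even_iff] at hea
      rw [Int.even_iff] at heb
      omega
    · rw [Int.not_even_iff] at hea heb
      omega
  linarith [key]
end

section
/- Let j ≥ 1 and let γ = (γ₁, …, γ_j) be positive integers satisfying γ_i − γ_{i+1} ≥ 2 for 1 ≤ i ≤ j−1 and γ_i − γ_{i+1} ≥ 3 whenever γ_i is even. Define π_k = γ_k + 4k − 2j − 2 + P(γ_k) + 2·∑_{i=k+1}^{j} P(γ_i) for 1 ≤ k ≤ j. Then π_k ≥ 2j for all 1 ≤ k ≤ j. -/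
lemma P_eq_mod (m : ℤ) : P m = m % 2 := by
  rcases Int.even_or_odd m with h | h
  · simp [P, h, Int.even_iff.mp h]
  · have h1 : ¬ Even m := Int.not_even_iff_odd.mpr h
    simp [P, h1, Int.odd_iff.mp h]

/-- Claim 3: every `π_k` is at least `2j`.  (Indices are 0-based.) -/
theorem pi_ge_two_j (j : ℕ) (hj : 1 ≤ j) (γ : Fin j → ℤ)
    (hpos : ∀ k, 1 ≤ γ k)
    (hgap : ∀ i : ℕ, ∀ h : i + 1 < j,
      2 ≤ γ ⟨i, Nat.lt_of_succ_lt h⟩ - γ ⟨i + 1, h⟩ ∧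
      (Even (γ ⟨i, Nat.lt_of_succ_lt h⟩) →
        3 ≤ γ ⟨i, Nat.lt_of_succ_lt h⟩ - γ ⟨i + 1, h⟩))
    (π : Fin j → ℤ)
    (hπ : ∀ k : Fin j, π k = γ k + 4 * ((k : ℤ) + 1) - 2 * (j : ℤ) - 2 + P (γ k)
      + 2 * ∑ i ∈ Finset.Ioi k, P (γ i)) :
    ∀ k : Fin j, 2 * (j : ℤ) ≤ π k := by
  have key : ∀ d : ℕ, ∀ k : Fin j, (k : ℕ) + d + 1 = j →
      4 * (d : ℤ) + 2 ≤ γ k + P (γ k) + 2 * ∑ i ∈ Finset.Ioi k, P (γ i) := by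
    intro d
    induction d with
    | zero =>
      intro k hk
      have hIoi : Finset.Ioi k = ∅ := by
        ext x
        simp only [Finset.mem_Ioi, Finset.notMem_empty, iff_false, not_lt]
        have := x.isLt
        have : (x : ℕ) ≤ (k : ℕ) := by omega
        exact Fin.le_def.mpr this
      have h1 := hpos k
      have h2 := P_eq_mod (γ k)
      have h3 := Int.emod_two_eq (γ k)
      rw [hIoi]
      simp only [Finset.sum_empty]
      omega
    | succ d ih =>
      intro k hk
      have hlt : (k : ℕ) + 1 < j := by omega
      set k' : Fin j := ⟨(k : ℕ) + 1, hlt⟩ with hk'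
      have hkk : k = ⟨(k : ℕ), Nat.lt_of_succ_lt hlt⟩ := by
        apply Fin.ext; rfl
      have hgapk := hgap (k : ℕ) hlt
      rw [← hkk] at hgapk
      rw [show (⟨(k : ℕ) + 1, hlt⟩ : Fin j) = k' from rfl] at hgapk
      have hIoi : Finset.Ioi k = insert k' (Finset.Ioi k') := by
        ext x
        simp only [Finset.mem_Ioi, Finset.mem_insert, Fin.lt_def, Fin.ext_iff, Fin.val_mk]
        have hk'v : (k' : ℕ) = (k : ℕ) + 1 := rfl
        omega
      have hnot : k' ∉ Finset.Ioi k' := by simp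
      have hsum : ∑ i ∈ Finset.Ioi k, P (γ i)
          = P (γ k') + ∑ i ∈ Finset.Ioi k', P (γ i) := by
        rw [hIoi, Finset.sum_insert hnot]
      have ih' := ih k' (by simp [hk']; omega)
      -- step inequality : γ k + P (γ k) ≥ γ k' + P (γ k') + 4  ... almost
      have hstep : γ k' + P (γ k') + 4 ≤ γ k + P (γ k) + P (γ k') + P (γ k') := by
        have e1 := P_eq_mod (γ k)
        have e2 := P_eq_mod (γ k')
        have m1 := Int.emod_two_eq (γ k)
        have m2 := Int.emod_two_eq (γ k')
        rcases hgapk with ⟨hg2, hg3⟩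
        rcases Int.even_or_odd (γ k) with he | ho
        · have := hg3 he
          have h0 : γ k % 2 = 0 := Int.even_iff.mp he
          -- if γ k' even then gap even so ≥ 4
          rcases Int.even_or_odd (γ k') with he' | ho'
          · have h0' : γ k' % 2 = 0 := Int.even_iff.mp he'
            omega
          · have h1' : γ k' % 2 = 1 := Int.odd_iff.mp ho'
            omega
        · have h1 : γ k % 2 = 1 := Int.odd_iff.mp ho
          rcases Int.even_or_odd (γ k') with he' | ho'
          · have h0' : γ k' % 2 = 0 := Int.even_iff.mp he'
            omega
          · have h1' : γ k' % 2 = 1 := Int.odd_iff.mp ho'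
            omega
      rw [hsum]
      push_cast
      omega
  intro k
  rw [hπ k]
  have hd : (k : ℕ) + (j - 1 - (k : ℕ)) + 1 = j := by have := k.isLt; omega
  have := key (j - 1 - (k : ℕ)) k hd
  have hcast : ((j - 1 - (k : ℕ) : ℕ) : ℤ) = (j : ℤ) - 1 - (k : ℤ) := by
    have := k.isLt; push_cast; omega
  rw [hcast] at this
  omega
end

section
/- Fix positive integers n and j. Let σ = (π, ν) ∈ S_{n,j}, write ν = ⟨1^{f₁} 3^{f₃} ⋯ (2j−1)^{f_{2j−1}}⟩ where f_{2k−1} ∈ {0,1} is the multiplicity of the part 2k−1 in ν, and define γ_k = π_k − 4k + 2j + 2 − f_{2k−1} − 2·∑_{i=k+1}^{j} f_{2i−1} for 1 ≤ k ≤ j (the map h). Then applying the map g to γ = (γ₁, …, γ_j), namely forming π'_k = γ_k + 4k − 2j − 2 + P(γ_k) + 2·∑_{i=k+1}^{j} P(γ_i) and f'_{2k−1} = P(γ_k), recovers σ: π'_k = π_k and f'_{2k−1} = f_{2k−1} for all 1 ≤ k ≤ j. That is, g(h(σ)) = σ for all σ ∈ S_{n,j}. -/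
/-- For all positive `n`, `j` and every `σ ∈ S_{n,j}`, applying `g` to `h σ`
recovers `σ`: the map `g` is a right inverse of `h` on `S_{n,j}`. -/
theorem gMap_hMap (n j : ℕ) (hn : 0 < n) (hj : 0 < j) :
    ∀ σ ∈ Sset n j, gMap j (hMap j σ) = σ := by
  rintro ⟨π, S⟩ ⟨-, -, heven, -, hS, -⟩
  have hparity : ∀ k : Fin j,
      (Even (hMap j (π, S) k) ↔ ¬ (2 * (k : ℤ) + 1 ∈ S)) := by
    intro k
    obtain ⟨a, ha⟩ := (heven k).1
    have ha' : π k = a + a := ha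
    show Even (π k - 4 * ((k : ℤ) + 1) + 2 * (j : ℤ) + 2
        - (if 2 * (k : ℤ) + 1 ∈ S then 1 else 0)
        - 2 * ∑ i ∈ Finset.Ioi k, (if 2 * (i : ℤ) + 1 ∈ S then 1 else 0)) ↔ _
    generalize (∑ i ∈ Finset.Ioi k, (if 2 * (i : ℤ) + 1 ∈ S then 1 else 0)) = s
    rw [Int.even_iff]
    by_cases h : 2 * (k : ℤ) + 1 ∈ S <;> simp [h] <;> omega
  have hP : ∀ k : Fin j,
      P (hMap j (π, S) k) = (if 2 * (k : ℤ) + 1 ∈ S then 1 else 0) := by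
    intro k
    by_cases h : (2 : ℤ) * k + 1 ∈ S <;>
      simp [P, hparity k, h]
  refine Prod.ext ?_ ?_
  · funext k
    show hMap j (π, S) k + 4 * ((k : ℤ) + 1) - 2 * j - 2 + P (hMap j (π, S) k)
      + 2 * ∑ i ∈ Finset.Ioi k, P (hMap j (π, S) i) = π k
    rw [hP k, Finset.sum_congr rfl (fun i _ => hP i)]
    simp only [hMap]
    ring
  · show Finset.image (fun k : Fin j => 2 * (k : ℤ) + 1)
      (Finset.univ.filter fun k => Odd (hMap j (π, S) k)) = S
    ext m
    simp only [Finset.mem_image, Finset.mem_filter, Finset.mem_univ, true_and,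
      ← Int.not_even_iff_odd]
    constructor
    · rintro ⟨k, hk, rfl⟩
      exact not_not.mp ((not_iff_not.mpr (hparity k)).mp hk)
    · intro hm
      obtain ⟨hodd, h1, h2⟩ := hS m hm
      obtain ⟨c, rfl⟩ := hodd
      have hc0 : 0 ≤ c := by omega
      have hcj : c.toNat < j := by omega
      refine ⟨⟨c.toNat, hcj⟩, ?_, by simp [hc0]⟩
      rw [hparity]
      simpa [hc0] using hm
end

section
/- Fix positive integers n and j. The map h : S_{n,j} → G_{n,j}, sending σ = (π, ν) with ν = ⟨1^{f₁} 3^{f₃} ⋯ (2j−1)^{f_{2j−1}}⟩ to γ = (γ₁, …, γ_j) where γ_k = π_k − 4k + 2j + 2 − f_{2k−1} − 2·∑_{i=k+1}^{j} f_{2i−1} for 1 ≤ k ≤ j, is well defined and is a bijection; it is the inverse of the map g : G_{n,j} → S_{n,j} given by g(γ) = (π, ν) with π_k = γ_k + 4k − 2j − 2 + P(γ_k) + 2·∑_{i=k+1}^{j} P(γ_i) and f_{2k−1} = P(γ_k). -/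
namespace GG

lemma P_eq_zero {m : ℤ} (h : Even m) : P m = 0 := if_pos h
lemma P_eq_one {m : ℤ} (h : Odd m) : P m = 1 := if_neg (Int.not_even_iff_odd.2 h)

lemma inj {j : ℕ} : Function.Injective (fun k : Fin j => 2*(k:ℤ)+1) := by
  intro a b hab
  simp only at hab
  exact Fin.ext (by exact_mod_cast (by linarith : ((a:ℕ):ℤ) = ((b:ℕ):ℤ)))

lemma Ioi_empty {j : ℕ} (k : Fin j) (h : (k:ℕ)+1 = j) : Finset.Ioi k = ∅ := by
  ext i
  simp only [Finset.mem_Ioi, Finset.notMem_empty, iff_false, not_lt, Fin.le_def]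
  omega

lemma sum_Ioi {j : ℕ} (k : Fin j) (h : (k:ℕ)+1 < j) (g : Fin j → ℤ) :
    ∑ i ∈ Finset.Ioi k, g i
      = g ⟨(k:ℕ)+1, h⟩ + ∑ i ∈ Finset.Ioi (⟨(k:ℕ)+1, h⟩ : Fin j), g i := by
  have : Finset.Ioi k = insert (⟨(k:ℕ)+1, h⟩ : Fin j) (Finset.Ioi ⟨(k:ℕ)+1, h⟩) := by
    ext i
    simp only [Finset.mem_Ioi, Finset.mem_insert, Fin.lt_def, Fin.ext_iff]
    omega
  rw [this, Finset.sum_insert (by simp)]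

lemma double_sum {j : ℕ} (g : Fin j → ℤ) :
    ∑ k, ∑ i ∈ Finset.Ioi k, g i = ∑ i : Fin j, (i:ℤ) * g i := by
  have hc := Finset.sum_comm' (s := (Finset.univ : Finset (Fin j)))
    (t := fun k => Finset.Ioi k) (t' := Finset.univ) (s' := fun i => Finset.Iio i)
    (f := fun _ i => g i)
    (by intro x y; simp [Finset.mem_Ioi, Finset.mem_Iio])
  rw [hc]
  refine Finset.sum_congr rfl fun i _ => ?_
  rw [Finset.sum_const, Fin.card_Iio, nsmul_eq_mul]

lemma sum_id (j : ℕ) : (∑ k : Fin j, (k:ℤ)) * 2 = j*j - j := by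
  induction j with
  | zero => simp
  | succ m ih =>
    rw [Fin.sum_univ_castSucc]
    simp only [Fin.coe_castSucc, Fin.val_last] at *
    push_cast at *
    linear_combination ih

lemma sum_split {j : ℕ} (u v : Fin j → ℤ) :
    ∑ k, (u k + 4*((k:ℤ)+1) - 2*(j:ℤ) - 2 + v k + 2 * ∑ i ∈ Finset.Ioi k, v i)
      = ∑ k, u k + ∑ k : Fin j, (2*(k:ℤ)+1) * v k := by
  simp only [Finset.sum_add_distrib, Finset.sum_sub_distrib, Finset.sum_const,
    Finset.card_univ, Fintype.card_fin, nsmul_eq_mul, ← Finset.mul_sum,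
    double_sum]
  have h2 : ∑ k : Fin j, (2*(k:ℤ)+1) * v k
      = ∑ k : Fin j, v k + 2 * ∑ k : Fin j, (k:ℤ) * v k := by
    rw [Finset.mul_sum, ← Finset.sum_add_distrib]
    exact Finset.sum_congr rfl fun k _ => by ring
  rw [h2]
  linear_combination (2:ℤ) * sum_id j

lemma antitone {j : ℕ} (f : Fin j → ℤ)
    (h : ∀ i : ℕ, ∀ hi : i + 1 < j, f ⟨i+1, hi⟩ ≤ f ⟨i, Nat.lt_of_succ_lt hi⟩) :
    Antitone f := by
  have key : ∀ d : ℕ, ∀ a b : Fin j, (b:ℕ) = (a:ℕ) + d → f b ≤ f a := by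
    intro d
    induction d with
    | zero => intro a b hab; have : a = b := Fin.ext (by omega); rw [this]
    | succ d ih =>
      intro a b hab
      have hd : (a:ℕ) + d + 1 < j := by omega
      have hb : b = ⟨(a:ℕ)+d+1, hd⟩ := Fin.ext (by simp; omega)
      calc f b ≤ f ⟨(a:ℕ)+d, Nat.lt_of_succ_lt hd⟩ := by rw [hb]; exact h _ hd
        _ ≤ f a := ih a _ (by simp)
  intro a b hab
  exact key ((b:ℕ) - (a:ℕ)) a b (by omega)

lemma step (a b : ℤ) (h2 : 2 ≤ a - b) (h3 : Even a → 3 ≤ a - b) :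
    4 ≤ a - b + P a + P b := by
  rcases Int.even_or_odd a with ha|ha <;> rcases Int.even_or_odd b with hb|hb
  · rw [P_eq_zero ha, P_eq_zero hb]
    obtain ⟨x, hx⟩ := ha; obtain ⟨y, hy⟩ := hb
    have := h3 ⟨x, hx⟩; omega
  · rw [P_eq_zero ha, P_eq_one hb]
    have := h3 ha; omega
  · rw [P_eq_one ha, P_eq_zero hb]
    obtain ⟨x, hx⟩ := ha; obtain ⟨y, hy⟩ := hb
    omega
  · rw [P_eq_one ha, P_eq_one hb]; omega

lemma Abound {j : ℕ} (γ : Fin j → ℤ) (h1 : ∀ k, 1 ≤ γ k)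
    (h2 : ∀ i : ℕ, ∀ h : i + 1 < j,
      2 ≤ γ ⟨i, Nat.lt_of_succ_lt h⟩ - γ ⟨i + 1, h⟩ ∧
      (Even (γ ⟨i, Nat.lt_of_succ_lt h⟩) → 3 ≤ γ ⟨i, Nat.lt_of_succ_lt h⟩ - γ ⟨i + 1, h⟩))
    (k : Fin j) :
    4 * ((j:ℤ) - 1 - (k:ℤ)) + 2 ≤ γ k + P (γ k) + 2 * ∑ i ∈ Finset.Ioi k, P (γ i) := by
  suffices H : ∀ d : ℕ, ∀ k : Fin j, (k:ℕ) + 1 + d = j →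
      4 * (d:ℤ) + 2 ≤ γ k + P (γ k) + 2 * ∑ i ∈ Finset.Ioi k, P (γ i) by
    have hk := k.isLt
    have := H (j - 1 - (k:ℕ)) k (by omega)
    have hcast : ((j - 1 - (k:ℕ) : ℕ) : ℤ) = (j:ℤ) - 1 - ((k:ℕ):ℤ) := by omega
    rw [hcast] at this
    exact this
  intro d
  induction d with
  | zero =>
    intro k hk
    rw [Ioi_empty k (by omega), Finset.sum_empty]
    rcases Int.even_or_odd (γ k) with h|h
    · rw [P_eq_zero h]
      obtain ⟨x, hx⟩ := h
      have := h1 k; omega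
    · rw [P_eq_one h]
      have := h1 k; omega
  | succ d ih =>
    intro k hk
    have hk1 : (k:ℕ) + 1 < j := by omega
    set k' : Fin j := ⟨(k:ℕ)+1, hk1⟩ with hk'
    have hihyp := ih k' (by simp [hk']; omega)
    have hsum := sum_Ioi k hk1 (fun i => P (γ i))
    have hstep : 4 ≤ γ k - γ k' + P (γ k) + P (γ k') := by
      have h2k := h2 (k:ℕ) hk1
      rw [Fin.eta] at h2k
      exact step _ _ h2k.1 h2k.2
    push_cast
    rw [hsum]
    push_cast at hihyp
    linarith

end GG

namespace GG

lemma nu_eq {j : ℕ} (ν : Finset ℤ) (hν : ∀ m ∈ ν, Odd m ∧ 1 ≤ m ∧ m ≤ 2*(j:ℤ)-1) :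
    ν = Finset.image (fun k : Fin j => 2*(k:ℤ)+1)
      (Finset.univ.filter fun k => 2*(k:ℤ)+1 ∈ ν) := by
  ext m
  simp only [Finset.mem_image, Finset.mem_filter, Finset.mem_univ, true_and]
  constructor
  · intro hm
    obtain ⟨ho, hm1, hm2⟩ := hν m hm
    obtain ⟨r, hr⟩ := ho
    have hrj : r.toNat < j := by omega
    have hval : 2*(((⟨r.toNat, hrj⟩ : Fin j)):ℤ)+1 = m := by
      simp only [Fin.val_mk]
      omega
    exact ⟨⟨r.toNat, hrj⟩, by rw [hval]; exact hm, hval⟩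
  · rintro ⟨k, hk, rfl⟩; exact hk

lemma gnu_sum {j : ℕ} (γ : Fin j → ℤ) :
    ∑ m ∈ (gMap j γ).2, m = ∑ k : Fin j, (2*(k:ℤ)+1) * P (γ k) := by
  show ∑ m ∈ Finset.image _ _, m = _
  rw [Finset.sum_image (fun a _ b _ hab => inj hab), Finset.sum_filter]
  refine Finset.sum_congr rfl fun k _ => ?_
  rcases Int.even_or_odd (γ k) with h|h
  · rw [if_neg (by simpa [Int.not_odd_iff_even] using h), P_eq_zero h, mul_zero]
  · rw [if_pos h, P_eq_one h, mul_one]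

lemma hnu_sum {j : ℕ} (ν : Finset ℤ) (hν : ∀ m ∈ ν, Odd m ∧ 1 ≤ m ∧ m ≤ 2*(j:ℤ)-1) :
    ∑ m ∈ ν, m = ∑ k : Fin j, (2*(k:ℤ)+1) * (if 2*(k:ℤ)+1 ∈ ν then 1 else 0) := by
  conv_lhs => rw [nu_eq ν hν]
  rw [Finset.sum_image (fun a _ b _ hab => inj hab), Finset.sum_filter]
  refine Finset.sum_congr rfl fun k _ => ?_
  split <;> simp

lemma g_mem {j : ℕ} (γ : Fin j → ℤ) (k : Fin j) :
    (2*(k:ℤ)+1 ∈ (gMap j γ).2) ↔ Odd (γ k) := by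
  show _ ∈ Finset.image _ _ ↔ _
  simp only [Finset.mem_image, Finset.mem_filter, Finset.mem_univ, true_and]
  constructor
  · rintro ⟨a, ha, hak⟩
    rwa [inj hak] at ha
  · intro h; exact ⟨k, h, rfl⟩

lemma g_if_eq {j : ℕ} (γ : Fin j → ℤ) (k : Fin j) :
    (if 2*(k:ℤ)+1 ∈ (gMap j γ).2 then (1:ℤ) else 0) = P (γ k) := by
  rcases Int.even_or_odd (γ k) with h|h
  · rw [if_neg (by simpa [g_mem, Int.not_odd_iff_even] using h), P_eq_zero h]
  · rw [if_pos ((g_mem γ k).2 h), P_eq_one h]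

lemma h_odd_iff {j : ℕ} (σ : (Fin j → ℤ) × Finset ℤ)
    (heven : ∀ k, Even (σ.1 k)) (k : Fin j) :
    Odd (hMap j σ k) ↔ 2*(k:ℤ)+1 ∈ σ.2 := by
  obtain ⟨t, ht⟩ := heven k
  rw [Int.odd_iff]
  simp only [hMap]
  by_cases hm : 2*(k:ℤ)+1 ∈ σ.2 <;> simp only [hm, if_true, if_false, iff_true, iff_false]
  · omega
  · omega

lemma h_P_eq {j : ℕ} (σ : (Fin j → ℤ) × Finset ℤ)
    (heven : ∀ k, Even (σ.1 k)) (k : Fin j) :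
    P (hMap j σ k) = (if 2*(k:ℤ)+1 ∈ σ.2 then (1:ℤ) else 0) := by
  by_cases hm : 2*(k:ℤ)+1 ∈ σ.2
  · rw [if_pos hm, P_eq_one ((h_odd_iff σ heven k).2 hm)]
  · rw [if_neg hm, P_eq_zero (Int.not_odd_iff_even.1 (fun ho => hm ((h_odd_iff σ heven k).1 ho)))]

end GG

namespace GG

lemma g_maps (n j : ℕ) : Set.MapsTo (gMap j) (Gset n j) (Sset n j) := by
  rintro γ ⟨h1, h2, h3⟩
  have hπ : ∀ k : Fin j, (gMap j γ).1 k
      = γ k + 4*((k:ℤ)+1) - 2*(j:ℤ) - 2 + P (γ k) + 2 * ∑ i ∈ Finset.Ioi k, P (γ i) :=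
    fun k => rfl
  refine ⟨?_, ?_, ?_, ?_, ?_, ?_⟩
  · -- Antitone
    apply antitone
    intro i hi
    rw [hπ, hπ]
    have hsum := sum_Ioi (⟨i, Nat.lt_of_succ_lt hi⟩ : Fin j) hi (fun x => P (γ x))
    have hstep : 4 ≤ γ ⟨i, Nat.lt_of_succ_lt hi⟩ - γ ⟨i+1, hi⟩
        + P (γ ⟨i, Nat.lt_of_succ_lt hi⟩) + P (γ ⟨i+1, hi⟩) :=
      step _ _ (h2 i hi).1 (h2 i hi).2
    rw [hsum]
    push_cast
    linarith
  · -- positivity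
    intro k
    have hA := Abound γ h1 h2 k
    rw [hπ]
    have hk := k.isLt
    have : ((k:ℕ):ℤ) < (j:ℤ) := by exact_mod_cast hk
    linarith
  · -- even and ≥ 2j
    intro k
    constructor
    · rw [hπ]
      obtain ⟨x, hx⟩ : Even (γ k + P (γ k)) := by
        rcases Int.even_or_odd (γ k) with h|h
        · rw [P_eq_zero h]; simpa using h
        · rw [P_eq_one h]; exact h.add_one
      rw [Int.even_iff]
      omega
    · have hA := Abound γ h1 h2 k
      rw [hπ]
      linarith
  · -- card
    show (Finset.image _ _).card ≤ j
    refine Finset.card_image_le.trans ((Finset.card_filter_le _ _).trans (by simp))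
  · -- membership bounds
    intro m hm
    obtain ⟨k, _, rfl⟩ : ∃ k : Fin j, k ∈ Finset.univ.filter (fun k => Odd (γ k))
        ∧ 2*(k:ℤ)+1 = m := by simpa [gMap, Finset.mem_image] using hm
    have hk := k.isLt
    have hk' : ((k:ℕ):ℤ) < (j:ℤ) := by exact_mod_cast hk
    refine ⟨⟨(k:ℤ), by ring⟩, by omega, by linarith⟩
  · -- sum
    have hs : ∑ k, (gMap j γ).1 k = ∑ k, γ k + ∑ k : Fin j, (2*(k:ℤ)+1) * P (γ k) :=
      sum_split γ (fun i => P (γ i))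
    rw [hs, gnu_sum, h3]
    ring

lemma h_maps (n j : ℕ) : Set.MapsTo (hMap j) (Sset n j) (Gset n j) := by
  rintro σ ⟨h1, _h2, h3, _h4, h5, h6⟩
  have heven : ∀ k, Even (σ.1 k) := fun k => (h3 k).1
  have hfle : ∀ k : Fin j, (0:ℤ) ≤ (if 2*(k:ℤ)+1 ∈ σ.2 then (1:ℤ) else 0)
      ∧ (if 2*(k:ℤ)+1 ∈ σ.2 then (1:ℤ) else 0) ≤ 1 := by
    intro k; split <;> norm_num
  have hSb : ∀ k : Fin j,
      (0:ℤ) ≤ ∑ i ∈ Finset.Ioi k, (if 2*(i:ℤ)+1 ∈ σ.2 then (1:ℤ) else 0)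
      ∧ ∑ i ∈ Finset.Ioi k, (if 2*(i:ℤ)+1 ∈ σ.2 then (1:ℤ) else 0)
          ≤ ((j - 1 - (k:ℕ) : ℕ) : ℤ) := by
    intro k
    constructor
    · exact Finset.sum_nonneg fun i _ => (hfle i).1
    · calc ∑ i ∈ Finset.Ioi k, (if 2*(i:ℤ)+1 ∈ σ.2 then (1:ℤ) else 0)
          ≤ (Finset.Ioi k).card • (1:ℤ) :=
            Finset.sum_le_card_nsmul _ _ _ (fun i _ => (hfle i).2)
        _ = ((j - 1 - (k:ℕ) : ℕ) : ℤ) := by rw [Fin.card_Ioi]; simp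
  refine ⟨?_, ?_, ?_⟩
  · -- γ k ≥ 1
    intro k
    have hπ := (h3 k).2
    have hk := k.isLt
    have hf := hfle k
    have hS := hSb k
    simp only [hMap]
    omega
  · -- gap conditions
    intro i hi
    set ka : Fin j := ⟨i, Nat.lt_of_succ_lt hi⟩ with hka
    set kb : Fin j := ⟨i+1, hi⟩ with hkb
    have hanti : σ.1 kb ≤ σ.1 ka := h1 (by rw [hka, hkb]; exact Fin.mk_le_mk.2 (by omega))
    have hsum := sum_Ioi ka hi (fun x => (if 2*(x:ℤ)+1 ∈ σ.2 then (1:ℤ) else 0))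
    have hdiff : hMap j σ ka - hMap j σ kb
        = (σ.1 ka - σ.1 kb) + 4
          - (if 2*(ka:ℤ)+1 ∈ σ.2 then (1:ℤ) else 0)
          - (if 2*(kb:ℤ)+1 ∈ σ.2 then (1:ℤ) else 0) := by
      simp only [hMap]
      rw [hsum]
      push_cast [hka, hkb]
      ring
    have hfa := hfle ka
    have hfb := hfle kb
    constructor
    · rw [hdiff]; linarith
    · intro hev
      have hfa0 : (if 2*(ka:ℤ)+1 ∈ σ.2 then (1:ℤ) else 0) = 0 := by
        rw [if_neg]
        intro hmem
        exact (Int.not_odd_iff_even.2 hev) ((h_odd_iff σ heven ka).2 hmem)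
      rw [hdiff, hfa0]; linarith
  · -- sum
    have key : ∑ k, (hMap j σ k + 4*((k:ℤ)+1) - 2*(j:ℤ) - 2
        + (if 2*(k:ℤ)+1 ∈ σ.2 then (1:ℤ) else 0)
        + 2 * ∑ i ∈ Finset.Ioi k, (if 2*(i:ℤ)+1 ∈ σ.2 then (1:ℤ) else 0))
        = ∑ k, σ.1 k := by
      refine Finset.sum_congr rfl fun k _ => ?_
      simp only [hMap]; ring
    rw [sum_split (hMap j σ) (fun i => (if 2*(i:ℤ)+1 ∈ σ.2 then (1:ℤ) else 0))] at key
    rw [← hnu_sum σ.2 h5] at key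
    linarith [h6]

lemma hg (n j : ℕ) : Set.LeftInvOn (hMap j) (gMap j) (Gset n j) := by
  intro γ _
  funext k
  show (gMap j γ).1 k - 4*((k:ℤ)+1) + 2*(j:ℤ) + 2
    - (if 2*(k:ℤ)+1 ∈ (gMap j γ).2 then 1 else 0)
    - 2 * ∑ i ∈ Finset.Ioi k, (if 2*(i:ℤ)+1 ∈ (gMap j γ).2 then 1 else 0) = γ k
  rw [g_if_eq, Finset.sum_congr rfl (fun i _ => g_if_eq γ i)]
  show γ k + 4*((k:ℤ)+1) - 2*(j:ℤ) - 2 + P (γ k) + 2 * ∑ i ∈ Finset.Ioi k, P (γ i)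
    - 4*((k:ℤ)+1) + 2*(j:ℤ) + 2 - P (γ k) - 2 * ∑ i ∈ Finset.Ioi k, P (γ i) = γ k
  ring

lemma gh (n j : ℕ) : Set.LeftInvOn (gMap j) (hMap j) (Sset n j) := by
  rintro σ ⟨_h1, _h2, h3, _h4, h5, _h6⟩
  have heven : ∀ k, Even (σ.1 k) := fun k => (h3 k).1
  refine Prod.ext ?_ ?_
  · funext k
    show hMap j σ k + 4*((k:ℤ)+1) - 2*(j:ℤ) - 2 + P (hMap j σ k)
      + 2 * ∑ i ∈ Finset.Ioi k, P (hMap j σ i) = σ.1 k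
    rw [h_P_eq σ heven, Finset.sum_congr rfl (fun i _ => h_P_eq σ heven i)]
    simp only [hMap]
    ring
  · show Finset.image (fun k : Fin j => 2*(k:ℤ)+1)
      (Finset.univ.filter fun k => Odd (hMap j σ k)) = σ.2
    rw [Finset.filter_congr (fun k _ => by
      rw [h_odd_iff σ heven k] : ∀ k ∈ Finset.univ,
        (Odd (hMap j σ k) ↔ 2*(k:ℤ)+1 ∈ σ.2))]
    exact (nu_eq σ.2 h5).symm

end GG

/-- For all positive `n` and `j`, the map `h : S_{n,j} → G_{n,j}` is well defined
(it maps `S_{n,j}` into `G_{n,j}`) and is a bijection; moreover it is a (two-sided)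
inverse of the map `g : G_{n,j} → S_{n,j}`. -/
theorem hMap_bijOn_invOn (n j : ℕ) (hn : 0 < n) (hj : 0 < j) :
    Set.BijOn (hMap j) (Sset n j) (Gset n j) ∧
    Set.InvOn (hMap j) (gMap j) (Gset n j) (Sset n j) := by
  have hinv : Set.InvOn (hMap j) (gMap j) (Gset n j) (Sset n j) := ⟨GG.hg n j, GG.gh n j⟩
  exact ⟨hinv.symm.bijOn (GG.h_maps n j) (GG.g_maps n j), hinv⟩
end
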